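/- arXiv:1308.2475 — 5 statements merged into one kernel-verified Lean document; each statement's English description precedes it below -/
import Mathlib

section
/- Let A be an n×n real symmetric positive semi-definite matrix with strictly positive diagonal entries a_{j,j} > 0 for all j, and define K_H := max_j ( Σ_{k≠j} a_{k,j}² ) / a_{j,j}². Let ε, δ ∈ (0,1). If the sample size N satisfies N > 2 K_H ε⁻² ln(2/δ), then the Hutchinson trace estimator satisfies Pr(|tr_H^N(A) − tr(A)| ≤ ε·tr(A)) ≥ 1 − δ. -/
open MeasureTheory Matrix

/-- The sign `+1`/`-1` associated to a Boolean coin flip; a uniform Boolean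
gives a Rademacher random variable. -/
noncomputable def rademacherSign (b : Bool) : ℝ := if b then 1 else -1

/-- The Hutchinson trace estimator `tr_H^N(A) = (1/N) ∑ᵢ wᵢᵗ A wᵢ`, where the
`N` Rademacher vectors `wᵢ` are encoded by a point `ω` of the sample space
`Fin N → Fin n → Bool`. -/
noncomputable def hutchinsonEstimator (n N : ℕ) (A : Matrix (Fin n) (Fin n) ℝ)
    (ω : Fin N → Fin n → Bool) : ℝ :=
  (1 / (N : ℝ)) * ∑ i : Fin N,
    (fun j => rademacherSign (ω i j)) ⬝ᵥ A.mulVec (fun j => rademacherSign (ω i j))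

/-- The uniform probability measure on `Fin N → Fin n → Bool`, i.e. `N` independent
vectors each with `n` i.i.d. Rademacher components. -/
noncomputable def rademacherMeasure (n N : ℕ) : Measure (Fin N → Fin n → Bool) :=
  (PMF.uniformOfFintype (Fin N → Fin n → Bool)).toMeasure

open Finset

/-- Deviation of a single Hutchinson sample from the trace. -/
noncomputable def hDev (n : ℕ) (A : Matrix (Fin n) (Fin n) ℝ) (w : Fin n → Bool) : ℝ :=
  (fun j => rademacherSign (w j)) ⬝ᵥ A.mulVec (fun j => rademacherSign (w j)) - A.trace

lemma sgn_mul_self (b : Bool) : rademacherSign b * rademacherSign b = 1 := by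
  cases b <;> simp [rademacherSign]

lemma sgn_beq (a b : Bool) : rademacherSign (a == b) = rademacherSign a * rademacherSign b := by
  cases a <;> cases b <;> simp [rademacherSign]

lemma quad_expand (n : ℕ) (A : Matrix (Fin n) (Fin n) ℝ) (w : Fin n → Bool) :
    (fun j => rademacherSign (w j)) ⬝ᵥ A.mulVec (fun j => rademacherSign (w j))
      = A.trace + ∑ j, rademacherSign (w j) *
          ∑ k ∈ Finset.univ.erase j, A j k * rademacherSign (w k) := by
  rw [Matrix.trace, ← Finset.sum_add_distrib]
  simp only [dotProduct, Matrix.mulVec, Matrix.diag]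
  refine Finset.sum_congr rfl fun j _ => ?_
  rw [← Finset.add_sum_erase Finset.univ (fun k => A j k * rademacherSign (w k))
    (Finset.mem_univ j)]
  rw [mul_add]
  congr 1
  rw [mul_comm, mul_assoc, sgn_mul_self, mul_one]

lemma sum_exp_sign_mul (n : ℕ) (c : Fin n → ℝ) (j : Fin n) :
    ∑ w : Fin n → Bool,
        Real.exp (rademacherSign (w j) * ∑ k ∈ univ.erase j, c k * rademacherSign (w k))
      = ∑ w : Fin n → Bool, Real.exp (∑ k ∈ univ.erase j, c k * rademacherSign (w k)) := by
  have hinv : Function.Involutive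
      (fun (w : Fin n → Bool) => fun k => if k = j then w j else (w k == w j)) := by
    intro w
    funext k
    by_cases h : k = j
    · simp [h]
    · simp only [if_neg h]
      cases w k <;> cases w j <;> simp
  calc ∑ w : Fin n → Bool,
        Real.exp (rademacherSign (w j) * ∑ k ∈ univ.erase j, c k * rademacherSign (w k))
      = ∑ w : Fin n → Bool, Real.exp (∑ k ∈ univ.erase j,
          c k * rademacherSign ((fun m => if m = j then w j else (w m == w j)) k)) := by
        refine Finset.sum_congr rfl fun w _ => ?_
        congr 1
        rw [Finset.mul_sum]
        refine Finset.sum_congr rfl fun k hk => ?_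
        have hkj : k ≠ j := (Finset.mem_erase.1 hk).1
        simp only [if_neg hkj]
        rw [sgn_beq]
        ring
    _ = ∑ w : Fin n → Bool, Real.exp (∑ k ∈ univ.erase j, c k * rademacherSign (w k)) := by
        exact Fintype.sum_equiv hinv.toPerm _ _ (fun w => rfl)

lemma sum_exp_lin (n : ℕ) (c : Fin n → ℝ) (j : Fin n) :
    ∑ w : Fin n → Bool, Real.exp (∑ k ∈ univ.erase j, c k * rademacherSign (w k))
      ≤ 2 ^ n * Real.exp ((∑ k ∈ univ.erase j, (c k) ^ 2) / 2) := by
  have hprod : ∀ w : Fin n → Bool,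
      ∏ k : Fin n, (if k = j then 1 else Real.exp (c k * rademacherSign (w k)))
        = ∏ k ∈ univ.erase j, Real.exp (c k * rademacherSign (w k)) := by
    intro w
    rw [← Finset.prod_erase Finset.univ (a := j)
      (f := fun k => if k = j then (1:ℝ) else Real.exp (c k * rademacherSign (w k))) (by simp)]
    exact Finset.prod_congr rfl fun k hk => if_neg (Finset.mem_erase.1 hk).1
  have key : ∑ w : Fin n → Bool, Real.exp (∑ k ∈ univ.erase j, c k * rademacherSign (w k))
      = ∏ k : Fin n, ∑ b : Bool, (if k = j then 1 else Real.exp (c k * rademacherSign b)) := by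
    rw [Finset.prod_univ_sum, Fintype.piFinset_univ]
    refine Finset.sum_congr rfl fun w _ => ?_
    rw [Real.exp_sum, ← hprod w]
  rw [key]
  have step : ∀ k : Fin n, ∑ b : Bool, (if k = j then 1 else Real.exp (c k * rademacherSign b))
      ≤ 2 * Real.exp ((if k = j then 0 else (c k)^2) / 2) := by
    intro k
    by_cases h : k = j
    · simp [h]
    · simp only [if_neg h, Fintype.sum_bool, rademacherSign]
      simp only [if_pos, if_neg, Bool.cond_true]
      have := Real.cosh_le_exp_half_sq (c k)
      rw [Real.cosh_eq] at this
      calc Real.exp (c k * 1) + Real.exp (c k * -1)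
          = 2 * ((Real.exp (c k) + Real.exp (-(c k))) / 2) := by ring_nf
        _ ≤ 2 * Real.exp ((c k)^2 / 2) := by nlinarith [this]
  calc ∏ k : Fin n, ∑ b : Bool, (if k = j then 1 else Real.exp (c k * rademacherSign b))
      ≤ ∏ k : Fin n, 2 * Real.exp ((if k = j then 0 else (c k)^2) / 2) := by
        refine Finset.prod_le_prod (fun k _ => ?_) (fun k _ => step k)
        refine Finset.sum_nonneg fun b _ => ?_
        split <;> positivity
    _ = 2 ^ n * Real.exp ((∑ k ∈ univ.erase j, (c k) ^ 2) / 2) := by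
        rw [Finset.prod_mul_distrib, Finset.prod_const, ← Real.exp_sum]
        congr 1
        · simp
        · have : ∑ k : Fin n, (if k = j then (0:ℝ) else (c k)^2) = ∑ k ∈ univ.erase j, (c k)^2 := by
            rw [← Finset.sum_erase Finset.univ (a := j)
              (f := fun k => if k = j then (0:ℝ) else (c k)^2) (by simp)]
            exact Finset.sum_congr rfl fun k hk => if_neg (Finset.mem_erase.1 hk).1
          rw [← Finset.sum_div, this]

lemma mgf_single (n : ℕ) (hn : 0 < n) (A : Matrix (Fin n) (Fin n) ℝ)
    (hsymm : ∀ j k, A j k = A k j) (hdiag : ∀ j, 0 < A j j) (KH : ℝ)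
    (hKH : ∀ j, (∑ k ∈ univ.erase j, (A k j)^2) / (A j j)^2 ≤ KH) (t : ℝ) :
    ∑ w : Fin n → Bool, Real.exp (t * hDev n A w)
      ≤ 2 ^ n * Real.exp (t ^ 2 * A.trace ^ 2 * KH / 2) := by
  haveI : NeZero n := ⟨hn.ne'⟩
  set T := A.trace with hT
  have htr : T = ∑ j, A j j := by simp [hT, Matrix.trace, Matrix.diag]
  have hTpos : 0 < T := by
    rw [htr]; exact Finset.sum_pos (fun j _ => hdiag j) Finset.univ_nonempty
  set X : Fin n → (Fin n → Bool) → ℝ := fun j w =>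
    rademacherSign (w j) * ∑ k ∈ univ.erase j, ((t * T / A j j) * A j k) * rademacherSign (w k)
    with hX
  have jensen : ∀ w : Fin n → Bool,
      Real.exp (t * hDev n A w) ≤ ∑ j, (A j j / T) * Real.exp (X j w) := by
    intro w
    have hexp : t * hDev n A w = ∑ j, (A j j / T) • (X j w) := by
      rw [hDev, quad_expand n A w, ← hT]
      rw [add_sub_cancel_left, Finset.mul_sum]
      refine Finset.sum_congr rfl fun j _ => ?_
      have haj : A j j ≠ 0 := (hdiag j).ne'
      have hTne : T ≠ 0 := hTpos.ne'
      rw [smul_eq_mul, hX]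
      simp only []
      rw [show (∑ k ∈ univ.erase j, ((t * T / A j j) * A j k) * rademacherSign (w k))
          = (t * T / A j j) * ∑ k ∈ univ.erase j, A j k * rademacherSign (w k) by
        rw [Finset.mul_sum]; exact Finset.sum_congr rfl fun k _ => by ring]
      field_simp
    rw [hexp]
    have := convexOn_exp.map_sum_le (t := Finset.univ) (w := fun j => A j j / T)
      (p := fun j => X j w) (fun j _ => div_nonneg (hdiag j).le hTpos.le)
      (by rw [← Finset.sum_div, ← htr, div_self hTpos.ne']) (fun j _ => Set.mem_univ _)
    simpa [smul_eq_mul] using this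
  calc ∑ w : Fin n → Bool, Real.exp (t * hDev n A w)
      ≤ ∑ w : Fin n → Bool, ∑ j, (A j j / T) * Real.exp (X j w) :=
        Finset.sum_le_sum fun w _ => jensen w
    _ = ∑ j, (A j j / T) * ∑ w : Fin n → Bool, Real.exp (X j w) := by
        rw [Finset.sum_comm]
        exact Finset.sum_congr rfl fun j _ => by rw [Finset.mul_sum]
    _ ≤ ∑ j, (A j j / T) * (2 ^ n * Real.exp (t ^ 2 * T ^ 2 * KH / 2)) := by
        refine Finset.sum_le_sum fun j _ => ?_
        refine mul_le_mul_of_nonneg_left ?_ (div_nonneg (hdiag j).le hTpos.le)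
        calc ∑ w : Fin n → Bool, Real.exp (X j w)
            = ∑ w : Fin n → Bool, Real.exp (∑ k ∈ univ.erase j,
                ((t * T / A j j) * A j k) * rademacherSign (w k)) :=
              sum_exp_sign_mul n _ j
          _ ≤ 2 ^ n * Real.exp ((∑ k ∈ univ.erase j, ((t * T / A j j) * A j k) ^ 2) / 2) :=
              sum_exp_lin n _ j
          _ ≤ 2 ^ n * Real.exp (t ^ 2 * T ^ 2 * KH / 2) := by
              refine mul_le_mul_of_nonneg_left (Real.exp_le_exp.2 ?_) (by positivity)
              have hsum : ∑ k ∈ univ.erase j, ((t * T / A j j) * A j k) ^ 2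
                  = (t ^ 2 * T ^ 2) * ((∑ k ∈ univ.erase j, (A k j) ^ 2) / (A j j) ^ 2) := by
                rw [Finset.sum_div, Finset.mul_sum]
                refine Finset.sum_congr rfl fun k _ => ?_
                rw [hsymm j k]
                have haj : A j j ≠ 0 := (hdiag j).ne'
                field_simp
              have hb : (∑ k ∈ univ.erase j, ((t * T / A j j) * A j k) ^ 2) ≤ t ^ 2 * T ^ 2 * KH := by
                rw [hsum]
                exact mul_le_mul_of_nonneg_left (hKH j) (by positivity)
              linarith
    _ = (∑ j, A j j / T) * (2 ^ n * Real.exp (t ^ 2 * T ^ 2 * KH / 2)) := by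
        rw [Finset.sum_mul]
    _ = 2 ^ n * Real.exp (t ^ 2 * T ^ 2 * KH / 2) := by
        rw [← Finset.sum_div, ← htr, div_self hTpos.ne', one_mul]

lemma chernoff_count (V : Type*) [Fintype V] (N : ℕ) (f : V → ℝ) (a t : ℝ) (ht : 0 ≤ t) :
    ∑ ω : Fin N → V, (if a ≤ ∑ i, f (ω i) then (1:ℝ) else 0)
      ≤ Real.exp (-(t * a)) * (∑ v, Real.exp (t * f v)) ^ N := by
  calc ∑ ω : Fin N → V, (if a ≤ ∑ i, f (ω i) then (1:ℝ) else 0)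
      ≤ ∑ ω : Fin N → V, Real.exp (t * (∑ i, f (ω i)) - t * a) := by
        refine Finset.sum_le_sum fun ω _ => ?_
        by_cases h : a ≤ ∑ i, f (ω i)
        · rw [if_pos h]
          refine Real.one_le_exp ?_
          have := mul_le_mul_of_nonneg_left h ht
          linarith
        · rw [if_neg h]; positivity
    _ = Real.exp (-(t * a)) * ∑ ω : Fin N → V, ∏ i, Real.exp (t * f (ω i)) := by
        rw [Finset.mul_sum]
        refine Finset.sum_congr rfl fun ω _ => ?_
        rw [← Real.exp_sum, ← Real.exp_add]
        congr 1
        rw [Finset.mul_sum]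
        ring
    _ = Real.exp (-(t * a)) * (∑ v, Real.exp (t * f v)) ^ N := by
        congr 1
        have h := Finset.sum_prod_piFinset (univ : Finset V)
          (fun (_ : Fin N) v => Real.exp (t * f v))
        rw [Fintype.piFinset_univ] at h
        rw [h, Finset.prod_const, Finset.card_univ, Fintype.card_fin]

lemma unif_meas_le (α : Type*) [Fintype α] [Nonempty α] [MeasurableSpace α]
    [MeasurableSingletonClass α] (s : Set α) [DecidablePred (· ∈ s)] (r : ℝ)
    (h : ∑ x : α, (if x ∈ s then (1:ℝ) else 0) ≤ r * Fintype.card α) :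
    (PMF.uniformOfFintype α).toMeasure s ≤ ENNReal.ofReal r := by
  rw [PMF.toMeasure_apply_fintype]
  have hcard : (0:ℝ) < Fintype.card α := by positivity
  have hr : 0 ≤ r := by
    by_contra hr
    push_neg at hr
    have h0 : (0:ℝ) ≤ ∑ x : α, (if x ∈ s then (1:ℝ) else 0) :=
      Finset.sum_nonneg fun x _ => by split <;> norm_num
    nlinarith
  have hpt : ∀ x : α, s.indicator (⇑(PMF.uniformOfFintype α)) x
      = ENNReal.ofReal (if x ∈ s then (1:ℝ) else 0) * (Fintype.card α : ENNReal)⁻¹ := by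
    intro x
    by_cases hx : x ∈ s
    · rw [Set.indicator_of_mem hx, PMF.uniformOfFintype_apply, if_pos hx]
      simp
    · rw [Set.indicator_of_notMem hx, if_neg hx]
      simp
  calc ∑ x : α, s.indicator (⇑(PMF.uniformOfFintype α)) x
      = (∑ x : α, ENNReal.ofReal (if x ∈ s then (1:ℝ) else 0)) * (Fintype.card α : ENNReal)⁻¹ := by
        rw [Finset.sum_mul]
        exact Finset.sum_congr rfl fun x _ => hpt x
    _ = ENNReal.ofReal (∑ x : α, (if x ∈ s then (1:ℝ) else 0)) * (Fintype.card α : ENNReal)⁻¹ := by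
        rw [ENNReal.ofReal_sum_of_nonneg (fun x _ => by split <;> norm_num)]
    _ ≤ ENNReal.ofReal (r * Fintype.card α) * (Fintype.card α : ENNReal)⁻¹ := by
        exact mul_le_mul_left (ENNReal.ofReal_le_ofReal h) _
    _ = ENNReal.ofReal r * ((Fintype.card α : ENNReal) * (Fintype.card α : ENNReal)⁻¹) := by
        rw [ENNReal.ofReal_mul hr, ← mul_assoc]
        congr 2
        rw [ENNReal.ofReal_natCast]
    _ = ENNReal.ofReal r := by
        rw [ENNReal.mul_inv_cancel (by exact_mod_cast Fintype.card_ne_zero) (by simp), mul_one]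

/-- matrix-dependent bound for the Hutchinson estimator. With
`K_H = max_j (∑_{k ≠ j} a_{k,j}²) / a_{j,j}²`, if `N > 2 K_H ε⁻² ln(2/δ)` then
`Pr(|tr_H^N(A) − tr(A)| ≤ ε tr(A)) ≥ 1 − δ`. -/
theorem hutchinson_matrix_dependent_bound (n N : ℕ) (hn : 0 < n)
    (A : Matrix (Fin n) (Fin n) ℝ) (hA : A.PosSemidef)
    (hdiag : ∀ j, 0 < A j j)
    (KH : ℝ)
    (hKH : KH = ⨆ j : Fin n, (∑ k ∈ Finset.univ.erase j, (A k j) ^ 2) / (A j j) ^ 2)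
    (ε δ : ℝ) (hε : ε ∈ Set.Ioo (0 : ℝ) 1) (hδ : δ ∈ Set.Ioo (0 : ℝ) 1)
    (hN : (N : ℝ) > 2 * KH / ε ^ 2 * Real.log (2 / δ)) :
    rademacherMeasure n N
        {ω | |hutchinsonEstimator n N A ω - A.trace| ≤ ε * A.trace}
      ≥ ENNReal.ofReal (1 - δ) := by
  classical
  obtain ⟨hε0, hε1⟩ := hε
  obtain ⟨hδ0, hδ1⟩ := hδ
  haveI : NeZero n := ⟨hn.ne'⟩
  have hsymm : ∀ j k, A j k = A k j := by
    intro j k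
    have h2 := hA.1.apply k j
    simpa using h2
  set T := A.trace with hT
  have htr : T = ∑ j, A j j := by simp [hT, Matrix.trace, Matrix.diag]
  have hTpos : 0 < T := by
    rw [htr]; exact Finset.sum_pos (fun j _ => hdiag j) Finset.univ_nonempty
  have hKle : ∀ j, (∑ k ∈ Finset.univ.erase j, (A k j)^2) / (A j j)^2 ≤ KH := by
    intro j
    rw [hKH]
    exact le_ciSup (f := fun j : Fin n => (∑ k ∈ Finset.univ.erase j, (A k j)^2) / (A j j)^2)
      (Set.Finite.bddAbove (Set.finite_range _)) j
  have hK0 : 0 ≤ KH := le_trans (by positivity) (hKle ⟨0, hn⟩)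
  have hlog : 0 < Real.log (2/δ) := Real.log_pos (by rw [lt_div_iff₀ hδ0]; linarith)
  have hrhs : 0 ≤ 2 * KH / ε^2 * Real.log (2/δ) :=
    mul_nonneg (div_nonneg (by linarith) (by positivity)) hlog.le
  have hNR : (0:ℝ) < N := lt_of_le_of_lt hrhs hN
  have hNne : (N:ℝ) ≠ 0 := hNR.ne'
  have hest : ∀ ω : Fin N → Fin n → Bool,
      hutchinsonEstimator n N A ω - T = (1/(N:ℝ)) * ∑ i, hDev n A (ω i) := by
    intro ω
    have hds : ∑ i, hDev n A (ω i)
        = (∑ i, (fun j => rademacherSign (ω i j)) ⬝ᵥ A.mulVec (fun j => rademacherSign (ω i j)))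
          - (N:ℝ) * T := by
      unfold hDev
      rw [Finset.sum_sub_distrib, Finset.sum_const, Finset.card_univ, Fintype.card_fin,
        nsmul_eq_mul, ← hT]
    rw [hds]
    unfold hutchinsonEstimator
    field_simp
  rcases hK0.eq_or_lt with hKz | hKpos
  · -- diagonal case : KH = 0
    have hoff : ∀ (j k : Fin n), k ≠ j → A k j = 0 := by
      intro j k hkj
      have h1 : (∑ m ∈ Finset.univ.erase j, (A m j)^2) / (A j j)^2 ≤ 0 := hKz ▸ hKle j
      have h2 : (0:ℝ) ≤ (∑ m ∈ Finset.univ.erase j, (A m j)^2) / (A j j)^2 := by positivity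
      have hne : (A j j)^2 ≠ 0 := pow_ne_zero _ (hdiag j).ne'
      have h3 : ∑ m ∈ Finset.univ.erase j, (A m j)^2 = 0 := by
        have h4 := le_antisymm h1 h2
        rcases div_eq_zero_iff.mp h4 with h5 | h5
        · exact h5
        · exact absurd h5 hne
      have h4 := (Finset.sum_eq_zero_iff_of_nonneg (fun m _ => sq_nonneg (A m j))).mp h3
      have h5 := h4 k (Finset.mem_erase.2 ⟨hkj, Finset.mem_univ k⟩)
      exact pow_eq_zero_iff (two_ne_zero) |>.mp h5
    have hDz : ∀ w : Fin n → Bool, hDev n A w = 0 := by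
      intro w
      unfold hDev
      rw [quad_expand n A w, ← hT, add_sub_cancel_left]
      refine Finset.sum_eq_zero fun j _ => ?_
      rw [Finset.sum_eq_zero fun k hk => ?_, mul_zero]
      rw [hoff k j (Finset.mem_erase.1 hk).1.symm, zero_mul]
    have hSuniv : {ω : Fin N → Fin n → Bool | |hutchinsonEstimator n N A ω - T| ≤ ε * T}
        = Set.univ := by
      ext ω
      simp only [Set.mem_setOf_eq, Set.mem_univ, iff_true]
      rw [hest ω]
      have hz : ∑ i, hDev n A (ω i) = 0 := Finset.sum_eq_zero fun i _ => hDz (ω i)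
      rw [hz, mul_zero, abs_zero]
      exact (mul_pos hε0 hTpos).le
    rw [ge_iff_le, hSuniv]
    haveI : IsProbabilityMeasure (rademacherMeasure n N) := by
      unfold rademacherMeasure; exact PMF.toMeasure.isProbabilityMeasure _
    rw [measure_univ]
    exact ENNReal.ofReal_le_one.2 (by linarith)
  · -- KH > 0
    set t := ε / (T * KH) with htdef
    have htpos : 0 < t := div_pos hε0 (mul_pos hTpos hKpos)
    have hmgf1 : ∑ w : Fin n → Bool, Real.exp (t * hDev n A w)
        ≤ 2 ^ n * Real.exp (t ^ 2 * T ^ 2 * KH / 2) := mgf_single n hn A hsymm hdiag KH hKle t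
    have hmgf2 : ∑ w : Fin n → Bool, Real.exp (t * -hDev n A w)
        ≤ 2 ^ n * Real.exp (t ^ 2 * T ^ 2 * KH / 2) := by
      have h := mgf_single n hn A hsymm hdiag KH hKle (-t)
      calc ∑ w : Fin n → Bool, Real.exp (t * -hDev n A w)
          = ∑ w : Fin n → Bool, Real.exp ((-t) * hDev n A w) :=
            Finset.sum_congr rfl fun w _ => by rw [show t * -hDev n A w = (-t) * hDev n A w from by ring]
        _ ≤ 2 ^ n * Real.exp ((-t) ^ 2 * T ^ 2 * KH / 2) := h
        _ = 2 ^ n * Real.exp (t ^ 2 * T ^ 2 * KH / 2) := by rw [neg_sq]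
    set a := (N:ℝ) * (ε * T) with hadef
    have hpoint : ∀ ω : Fin N → Fin n → Bool,
        (if ¬ |hutchinsonEstimator n N A ω - T| ≤ ε * T then (1:ℝ) else 0)
          ≤ (if a ≤ ∑ i, hDev n A (ω i) then (1:ℝ) else 0)
            + (if a ≤ ∑ i, -hDev n A (ω i) then (1:ℝ) else 0) := by
      intro ω
      have hind1 : (0:ℝ) ≤ (if a ≤ ∑ i, hDev n A (ω i) then (1:ℝ) else 0) := by
        split <;> norm_num
      have hind2 : (0:ℝ) ≤ (if a ≤ ∑ i, -hDev n A (ω i) then (1:ℝ) else 0) := by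
        split <;> norm_num
      by_cases h : |hutchinsonEstimator n N A ω - T| ≤ ε * T
      · rw [if_neg (not_not_intro h)]
        linarith
      · rw [if_pos h]
        push_neg at h
        rw [hest ω, abs_mul, abs_of_pos (by positivity : (0:ℝ) < 1/(N:ℝ)), one_div,
          inv_mul_eq_div] at h
        have h2 : a ≤ |∑ i, hDev n A (ω i)| := by
          have h3 := (lt_div_iff₀ hNR).mp h
          calc a = ε * T * (N:ℝ) := by rw [hadef]; ring
            _ ≤ |∑ i, hDev n A (ω i)| := h3.le
        rcases le_abs.mp h2 with hc | hc
        · rw [if_pos hc]; linarith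
        · have hc2 : a ≤ ∑ i, -hDev n A (ω i) := by
            rw [Finset.sum_neg_distrib]; linarith
          rw [if_pos hc2]; linarith
    have hch1 : ∑ ω : Fin N → Fin n → Bool, (if a ≤ ∑ i, hDev n A (ω i) then (1:ℝ) else 0)
        ≤ Real.exp (-(t*a)) * (2^n * Real.exp (t^2*T^2*KH/2))^N := by
      refine (chernoff_count (Fin n → Bool) N (hDev n A) a t htpos.le).trans ?_
      exact mul_le_mul_of_nonneg_left
        (pow_le_pow_left₀ (Finset.sum_nonneg fun v _ => (Real.exp_pos _).le) hmgf1 N)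
        (Real.exp_pos _).le
    have hch2 : ∑ ω : Fin N → Fin n → Bool, (if a ≤ ∑ i, -hDev n A (ω i) then (1:ℝ) else 0)
        ≤ Real.exp (-(t*a)) * (2^n * Real.exp (t^2*T^2*KH/2))^N := by
      refine (chernoff_count (Fin n → Bool) N (fun w => -hDev n A w) a t htpos.le).trans ?_
      exact mul_le_mul_of_nonneg_left
        (pow_le_pow_left₀ (Finset.sum_nonneg fun v _ => (Real.exp_pos _).le) hmgf2 N)
        (Real.exp_pos _).le
    have hcardn : Fintype.card (Fin N → Fin n → Bool) = (2^n)^N := by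
      simp [Fintype.card_fun]
    have hcard : (Fintype.card (Fin N → Fin n → Bool) : ℝ) = ((2:ℝ)^n)^N := by
      rw [hcardn]; push_cast; ring
    have hEb : Real.exp (-(t*a)) * ((2:ℝ)^n * Real.exp (t^2*T^2*KH/2))^N
        ≤ (δ/2) * ((2:ℝ)^n)^N := by
      rw [mul_pow, ← Real.exp_nat_mul]
      have hc1 : Real.exp (-(t*a)) * (((2:ℝ)^n)^N * Real.exp ((N:ℝ)*(t^2*T^2*KH/2)))
          = ((2:ℝ)^n)^N * Real.exp (-(t*a) + (N:ℝ)*(t^2*T^2*KH/2)) := by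
        rw [Real.exp_add]; ring
      rw [hc1]
      have harg : -(t*a) + (N:ℝ)*(t^2*T^2*KH/2) = -((N:ℝ)*ε^2/(2*KH)) := by
        rw [htdef, hadef]
        field_simp
        ring
      rw [harg]
      have hlt : Real.log (2/δ) < (N:ℝ)*ε^2/(2*KH) := by
        have h1 : (0:ℝ) < 2*KH/ε^2 := by positivity
        have h2 : Real.log (2/δ) * (2*KH/ε^2) < (N:ℝ) := by rw [mul_comm]; exact hN
        calc Real.log (2/δ) < (N:ℝ) / (2*KH/ε^2) := (lt_div_iff₀ h1).mpr h2
          _ = (N:ℝ)*ε^2/(2*KH) := by rw [div_div_eq_mul_div]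
      have hexp2 : Real.exp (-((N:ℝ)*ε^2/(2*KH))) ≤ δ/2 := by
        have hlt2 := Real.exp_lt_exp.2 (neg_lt_neg hlt)
        rw [Real.exp_neg (Real.log (2/δ)), Real.exp_log (by positivity : (0:ℝ) < 2/δ),
          inv_div] at hlt2
        linarith
      calc ((2:ℝ)^n)^N * Real.exp (-((N:ℝ)*ε^2/(2*KH)))
          ≤ ((2:ℝ)^n)^N * (δ/2) := mul_le_mul_of_nonneg_left hexp2 (by positivity)
        _ = (δ/2) * ((2:ℝ)^n)^N := by ring
    have hreal : ∑ ω : Fin N → Fin n → Bool,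
        (if ω ∈ {ω : Fin N → Fin n → Bool | ¬ |hutchinsonEstimator n N A ω - T| ≤ ε * T}
          then (1:ℝ) else 0)
        ≤ δ * Fintype.card (Fin N → Fin n → Bool) := by
      calc ∑ ω : Fin N → Fin n → Bool,
          (if ω ∈ {ω : Fin N → Fin n → Bool | ¬ |hutchinsonEstimator n N A ω - T| ≤ ε * T}
            then (1:ℝ) else 0)
          ≤ ∑ ω : Fin N → Fin n → Bool,
            ((if a ≤ ∑ i, hDev n A (ω i) then (1:ℝ) else 0)
              + (if a ≤ ∑ i, -hDev n A (ω i) then (1:ℝ) else 0)) :=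
            Finset.sum_le_sum fun ω _ => hpoint ω
        _ = (∑ ω : Fin N → Fin n → Bool, (if a ≤ ∑ i, hDev n A (ω i) then (1:ℝ) else 0))
            + ∑ ω : Fin N → Fin n → Bool, (if a ≤ ∑ i, -hDev n A (ω i) then (1:ℝ) else 0) :=
            Finset.sum_add_distrib
        _ ≤ Real.exp (-(t*a)) * (2^n * Real.exp (t^2*T^2*KH/2))^N
            + Real.exp (-(t*a)) * (2^n * Real.exp (t^2*T^2*KH/2))^N := add_le_add hch1 hch2
        _ ≤ (δ/2) * ((2:ℝ)^n)^N + (δ/2) * ((2:ℝ)^n)^N := add_le_add hEb hEb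
        _ = δ * ((2:ℝ)^n)^N := by ring
        _ = δ * Fintype.card (Fin N → Fin n → Bool) := by rw [hcard]
    have hμc : rademacherMeasure n N
        {ω : Fin N → Fin n → Bool | ¬ |hutchinsonEstimator n N A ω - T| ≤ ε * T}
        ≤ ENNReal.ofReal δ :=
      unif_meas_le _ _ δ hreal
    have hmeas : MeasurableSet
        {ω : Fin N → Fin n → Bool | |hutchinsonEstimator n N A ω - T| ≤ ε * T} :=
      (Set.toFinite _).measurableSet
    haveI : IsProbabilityMeasure (rademacherMeasure n N) := by
      unfold rademacherMeasure; exact PMF.toMeasure.isProbabilityMeasure _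
    have hadd : rademacherMeasure n N {ω | |hutchinsonEstimator n N A ω - T| ≤ ε * T}
        + rademacherMeasure n N {ω | |hutchinsonEstimator n N A ω - T| ≤ ε * T}ᶜ = 1 := by
      rw [measure_add_measure_compl hmeas, measure_univ]
    have hcompl : {ω : Fin N → Fin n → Bool | |hutchinsonEstimator n N A ω - T| ≤ ε * T}ᶜ
        = {ω : Fin N → Fin n → Bool | ¬ |hutchinsonEstimator n N A ω - T| ≤ ε * T} :=
      Set.compl_setOf _
    have h1 : rademacherMeasure n N {ω | |hutchinsonEstimator n N A ω - T| ≤ ε * T}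
        = 1 - rademacherMeasure n N {ω | |hutchinsonEstimator n N A ω - T| ≤ ε * T}ᶜ :=
      ENNReal.eq_sub_of_add_eq (measure_ne_top _ _) hadd
    rw [ge_iff_le, h1, hcompl]
    calc ENNReal.ofReal (1 - δ) = 1 - ENNReal.ofReal δ := by
          rw [ENNReal.ofReal_sub 1 hδ0.le, ENNReal.ofReal_one]
      _ ≤ 1 - rademacherMeasure n N
            {ω : Fin N → Fin n → Bool | ¬ |hutchinsonEstimator n N A ω - T| ≤ ε * T} :=
          tsub_le_tsub_left hμc 1
end

section
/- Let A be an n×n real matrix and let N ≥ 1. The uniform unit vector trace estimator with replacement satisfies Var(tr_{U₁}^N(A)) = (1/N) ( n Σ_{j=1}^n a_{jj}² − tr(A)² ). -/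
open MeasureTheory Matrix

/-- `unitVec n j` is the `j`-th column of the scaled identity matrix `√n · I`,
i.e. `√n` times the `j`-th standard basis vector of `ℝⁿ`. -/
noncomputable def unitVec (n : ℕ) (j : Fin n) : Fin n → ℝ :=
  fun k => Real.sqrt n * if k = j then 1 else 0

/-- The unit vector trace estimator `(1/N) ∑ᵢ wᵢᵗ A wᵢ`, where `wᵢ = unitVec n (f i)`
and `f : Fin N → Fin n` records which (scaled) unit vectors were drawn. -/
noncomputable def unitVectorEstimator (n N : ℕ) (A : Matrix (Fin n) (Fin n) ℝ)
    (f : Fin N → Fin n) : ℝ :=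
  (1 / (N : ℝ)) * ∑ i : Fin N, (unitVec n (f i)) ⬝ᵥ A.mulVec (unitVec n (f i))

/-- The uniform probability measure on `Fin N → Fin n`: `N` indices drawn independently
and uniformly, i.e. unit vector sampling with replacement (`U₁`). -/
noncomputable def withReplacementMeasure (n N : ℕ) : Measure (Fin N → Fin n) :=
  (Fintype.card (Fin N → Fin n) : ENNReal)⁻¹ • Measure.count

/-- The uniform probability measure on injective tuples of indices: `N` distinct indices
drawn uniformly without replacement (`U₂`). -/
noncomputable def withoutReplacementMeasure (n N : ℕ) :
    Measure {f : Fin N → Fin n // Function.Injective f} :=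
  (Fintype.card {f : Fin N → Fin n // Function.Injective f} : ENNReal)⁻¹ • Measure.count

open Finset

/-- The quadratic form of a scaled unit vector picks out `n` times a diagonal entry. -/
lemma quad {n : ℕ} (A : Matrix (Fin n) (Fin n) ℝ) (j : Fin n) :
    unitVec n j ⬝ᵥ A.mulVec (unitVec n j) = n * A j j := by
  simp [unitVec, dotProduct, mulVec, mul_ite, ite_mul, Finset.mul_sum, Finset.sum_ite_eq,
    mul_comm, mul_assoc]
  rw [mul_comm, mul_assoc, Real.mul_self_sqrt (Nat.cast_nonneg n), mul_comm]

lemma sum_fun_single {n N : ℕ} (g : Fin n → ℝ) (i : Fin N) :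
    ∑ f : Fin N → Fin n, g (f i) = (n : ℝ) ^ (N - 1) * ∑ j, g j := by
  have h := Finset.prod_univ_sum (fun _ : Fin N => (Finset.univ : Finset (Fin n)))
      (fun m j => if m = i then g j else 1)
  simp only [Fintype.piFinset_univ] at h
  have hr : ∀ f : Fin N → Fin n, (∏ m, if m = i then g (f m) else 1) = g (f i) := by
    intro f
    rw [Finset.prod_ite_eq']
    simp
  have hl : (∏ m : Fin N, ∑ j : Fin n, if m = i then g j else 1)
      = (∑ j, g j) * (n : ℝ) ^ (N - 1) := by
    rw [← Finset.mul_prod_erase univ _ (mem_univ i)]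
    simp only [if_pos rfl]
    congr 1
    rw [Finset.prod_congr rfl (fun m hm => ?_), Finset.prod_const,
      Finset.card_erase_of_mem (mem_univ i), Finset.card_univ, Fintype.card_fin]
    simp only [Finset.mem_erase] at hm
    simp [hm.1, Finset.sum_const]
  rw [Finset.sum_congr rfl (fun f _ => (hr f).symm), ← h, hl, mul_comm]

lemma sum_fun_pair {n N : ℕ} (g h : Fin n → ℝ) {i k : Fin N} (hik : i ≠ k) :
    ∑ f : Fin N → Fin n, g (f i) * h (f k)
      = (n : ℝ) ^ (N - 2) * ((∑ j, g j) * (∑ j, h j)) := by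
  have hp := Finset.prod_univ_sum (fun _ : Fin N => (Finset.univ : Finset (Fin n)))
      (fun m j => if m = i then g j else if m = k then h j else 1)
  simp only [Fintype.piFinset_univ] at hp
  have hki : k ∈ univ.erase i := by simp [hik.symm]
  have hr : ∀ f : Fin N → Fin n,
      (∏ m, if m = i then g (f m) else if m = k then h (f m) else 1) = g (f i) * h (f k) := by
    intro f
    rw [← Finset.mul_prod_erase univ _ (mem_univ i), if_pos rfl,
      ← Finset.mul_prod_erase _ _ hki]
    rw [if_neg hik.symm, if_pos rfl, Finset.prod_eq_one, mul_one]
    intro m hm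
    simp only [Finset.mem_erase] at hm
    simp [hm.1, hm.2.1]
  have hl : (∏ m : Fin N, ∑ j : Fin n, if m = i then g j else if m = k then h j else 1)
      = (∑ j, g j) * ((∑ j, h j) * (n : ℝ) ^ (N - 2)) := by
    rw [← Finset.mul_prod_erase univ _ (mem_univ i), ← Finset.mul_prod_erase _ _ hki]
    simp only [if_pos rfl, if_neg hik.symm]
    congr 1
    congr 1
    rw [Finset.prod_congr rfl (fun m hm => ?_), Finset.prod_const,
      Finset.card_erase_of_mem hki, Finset.card_erase_of_mem (mem_univ i),
      Finset.card_univ, Fintype.card_fin, Nat.sub_sub]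
    simp only [Finset.mem_erase] at hm
    simp [hm.1, hm.2.1, Finset.sum_const]
  rw [Finset.sum_congr rfl (fun f _ => (hr f).symm), ← hp, hl]
  ring

lemma wrm_prob (n N : ℕ) (hn : 0 < n) : IsProbabilityMeasure (withReplacementMeasure n N) := by
  constructor
  rw [withReplacementMeasure, Measure.smul_apply, Measure.count_univ, smul_eq_mul]
  rw [ENat.card_eq_coe_fintype_card, ENat.toENNReal_coe]
  rw [ENNReal.inv_mul_cancel]
  · simp [Fintype.card_fun, hn.ne']
  · exact ENNReal.natCast_ne_top _

lemma wrm_integral (n N : ℕ) (hn : 0 < n) (g : (Fin N → Fin n) → ℝ) :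
    ∫ f, g f ∂(withReplacementMeasure n N) = ((n : ℝ) ^ N)⁻¹ * ∑ f : Fin N → Fin n, g f := by
  haveI := wrm_prob n N hn
  rw [integral_fintype (f := g) (Integrable.of_finite), Finset.mul_sum]
  refine Finset.sum_congr rfl fun f _ => ?_
  rw [Measure.real, withReplacementMeasure, Measure.smul_apply, Measure.count_singleton]
  simp [Fintype.card_fun, ENNReal.toReal_inv]

/-- the variance of the unit vector trace estimator with replacement is
`Var(tr_{U₁}^N(A)) = (1/N) (n ∑ⱼ aⱼⱼ² − tr(A)²)`. -/
theorem unit_vector_with_replacement_variance (n N : ℕ) (A : Matrix (Fin n) (Fin n) ℝ)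
    (hN : 1 ≤ N) :
    ProbabilityTheory.variance (unitVectorEstimator n N A) (withReplacementMeasure n N)
      = (1 / (N : ℝ)) * ((n : ℝ) * ∑ j : Fin n, (A j j) ^ 2 - A.trace ^ 2) := by
  rcases Nat.eq_zero_or_pos n with hn | hn
  · subst hn
    haveI : IsEmpty (Fin N → Fin 0) := ⟨fun f => (f ⟨0, hN⟩).elim0⟩
    have hμ : withReplacementMeasure 0 N = 0 := Subsingleton.elim _ _
    rw [hμ]
    simp [ProbabilityTheory.variance, ProbabilityTheory.evariance, Matrix.trace]
  -- main case
  haveI := wrm_prob n N hn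
  set b : Fin n → ℝ := fun j => (n : ℝ) * A j j with hb
  have hest : ∀ f : Fin N → Fin n,
      unitVectorEstimator n N A f = (1 / (N : ℝ)) * ∑ i, b (f i) := by
    intro f
    simp only [unitVectorEstimator, quad, hb]
  have hN0 : (N : ℝ) ≠ 0 := by positivity
  have hn0 : (n : ℝ) ≠ 0 := by positivity
  have hS1 : ∑ f : Fin N → Fin n, (∑ i, b (f i))
      = (N : ℝ) * ((n : ℝ) ^ (N - 1) * ∑ j, b j) := by
    rw [Finset.sum_comm]
    simp [sum_fun_single, Finset.sum_const, Finset.card_univ]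
  have hS2 : ∑ f : Fin N → Fin n, (∑ i, b (f i)) ^ 2
      = (N : ℝ) * ((n : ℝ) ^ (N - 1) * ∑ j, b j * b j)
        + (N : ℝ) * ((N : ℝ) - 1) * ((n : ℝ) ^ (N - 2) * (∑ j, b j) ^ 2) := by
    have expand : ∀ f : Fin N → Fin n, (∑ i, b (f i)) ^ 2
        = ∑ i, ∑ k, b (f i) * b (f k) := by
      intro f
      rw [sq, Finset.sum_mul_sum]
    rw [Finset.sum_congr rfl (fun f _ => expand f), Finset.sum_comm]
    have inner : ∀ i : Fin N, ∑ f : Fin N → Fin n, (∑ k, b (f i) * b (f k))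
        = (n : ℝ) ^ (N - 1) * (∑ j, b j * b j)
          + ((N : ℝ) - 1) * ((n : ℝ) ^ (N - 2) * (∑ j, b j) ^ 2) := by
      intro i
      rw [Finset.sum_comm]
      rw [← Finset.add_sum_erase _ _ (mem_univ i)]
      congr 1
      · exact sum_fun_single (fun j => b j * b j) i
      · rw [Finset.sum_congr rfl (fun k hk => sum_fun_pair b b (Finset.ne_of_mem_erase hk).symm),
          Finset.sum_const, Finset.card_erase_of_mem (mem_univ i), Finset.card_univ,
          Fintype.card_fin, nsmul_eq_mul, Nat.cast_sub hN, Nat.cast_one, sq]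
    rw [Finset.sum_congr rfl (fun i _ => inner i), Finset.sum_add_distrib]
    simp [Finset.sum_const, Finset.card_univ, mul_add]
    ring
  -- variance via variance_def'
  rw [ProbabilityTheory.variance_eq_sub (MemLp.of_discrete)]
  have hint1 : ∫ f, unitVectorEstimator n N A f ∂(withReplacementMeasure n N)
      = ((n : ℝ) ^ N)⁻¹ * ((1 / (N : ℝ)) * ((N : ℝ) * ((n : ℝ) ^ (N - 1) * ∑ j, b j))) := by
    rw [wrm_integral n N hn]
    rw [Finset.sum_congr rfl (fun f _ => hest f), ← Finset.mul_sum, hS1]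
  have hint2 : ∫ f, (unitVectorEstimator n N A ^ 2) f ∂(withReplacementMeasure n N)
      = ((n : ℝ) ^ N)⁻¹ * ((1 / (N : ℝ)) ^ 2 *
          ((N : ℝ) * ((n : ℝ) ^ (N - 1) * ∑ j, b j * b j)
            + (N : ℝ) * ((N : ℝ) - 1) * ((n : ℝ) ^ (N - 2) * (∑ j, b j) ^ 2))) := by
    rw [wrm_integral n N hn]
    have : ∀ f : Fin N → Fin n, (unitVectorEstimator n N A ^ 2) f
        = (1 / (N : ℝ)) ^ 2 * (∑ i, b (f i)) ^ 2 := by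
      intro f
      rw [Pi.pow_apply, hest f, mul_pow]
    rw [Finset.sum_congr rfl (fun f _ => this f), ← Finset.mul_sum, hS2]
  rw [hint1, hint2]
  have hsb : ∑ j, b j = (n : ℝ) * A.trace := by
    simp [hb, Matrix.trace, Matrix.diag, Finset.mul_sum]
  have hsb2 : ∑ j, b j * b j = (n : ℝ) ^ 2 * ∑ j, (A j j) ^ 2 := by
    simp only [hb, Finset.mul_sum]
    refine Finset.sum_congr rfl fun j _ => by ring
  rw [hsb, hsb2]
  have e1 : (n : ℝ) ^ N = (n : ℝ) ^ (N - 1) * n := by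
    rw [← pow_succ, Nat.sub_add_cancel hN]
  rcases eq_or_lt_of_le hN with h1 | h2
  · -- N = 1
    rw [← h1]
    norm_num [e1, ← h1]
    field_simp
  · have hN2 : 2 ≤ N := h2
    have e2 : (n : ℝ) ^ (N - 1) = (n : ℝ) ^ (N - 2) * n := by
      rw [← pow_succ]
      congr 1
      omega
    rw [e1, e2]
    have hp : (n : ℝ) ^ (N - 2) ≠ 0 := pow_ne_zero _ hn0
    field_simp
    ring
end

section
/- Let A be an n×n real matrix with n ≥ 2 and let 1 ≤ N ≤ n. The uniform unit vector trace estimator without replacement satisfies Var(tr_{U₂}^N(A)) = ((n−N)/(N(n−1))) ( n Σ_{j=1}^n a_{jj}² − tr(A)² ). -/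
open MeasureTheory Matrix

section Aux

variable {n N : ℕ}

/-- Post-composition with a permutation, as an equivalence of injective tuples. -/
def permComp (σ : Equiv.Perm (Fin n)) :
    {f : Fin N → Fin n // Function.Injective f} ≃ {f : Fin N → Fin n // Function.Injective f} where
  toFun f := ⟨σ ∘ f.1, σ.injective.comp f.2⟩
  invFun f := ⟨σ.symm ∘ f.1, σ.symm.injective.comp f.2⟩
  left_inv f := by ext k; simp
  right_inv f := by ext k; simp

lemma card_fiber1 (i : Fin N) (j j' : Fin n) :
    (Finset.univ.filter
      (fun f : {f : Fin N → Fin n // Function.Injective f} => f.1 i = j)).card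
    = (Finset.univ.filter
      (fun f : {f : Fin N → Fin n // Function.Injective f} => f.1 i = j')).card := by
  apply Finset.card_equiv (permComp (Equiv.swap j j'))
  intro f
  simp only [Finset.mem_filter, Finset.mem_univ, true_and, permComp, Equiv.coe_fn_mk,
    Function.comp_apply]
  constructor
  · rintro rfl; simp
  · intro h
    have : Equiv.swap j j' (f.1 i) = Equiv.swap j j' j := by simpa using h
    exact (Equiv.swap j j').injective this

lemma card_fiber1_mul (i : Fin N) (j : Fin n) :
    n * (Finset.univ.filter
      (fun f : {f : Fin N → Fin n // Function.Injective f} => f.1 i = j)).card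
    = Fintype.card {f : Fin N → Fin n // Function.Injective f} := by
  have h := Finset.card_eq_sum_card_fiberwise
    (f := fun f : {f : Fin N → Fin n // Function.Injective f} => f.1 i)
    (s := Finset.univ) (t := Finset.univ) (fun x _ => Finset.mem_univ _)
  rw [Finset.card_univ] at h
  rw [h]
  rw [Finset.sum_congr rfl (fun j' _ => (card_fiber1 i j' j))]
  simp [mul_comm]

lemma sum_fiber1 (g : Fin n → ℝ) (i : Fin N) :
    (n : ℝ) * ∑ f : {f : Fin N → Fin n // Function.Injective f}, g (f.1 i)
    = (Fintype.card {f : Fin N → Fin n // Function.Injective f} : ℝ) * ∑ j : Fin n, g j := by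
  have h := Finset.sum_fiberwise_of_maps_to (g := fun f : {f : Fin N → Fin n // Function.Injective f} => f.1 i)
    (s := Finset.univ) (t := Finset.univ) (fun x _ => Finset.mem_univ _) (fun f => g (f.1 i))
  rw [← h, Finset.mul_sum]
  rw [Finset.mul_sum]
  refine Finset.sum_congr rfl fun j _ => ?_
  have : ∑ f ∈ Finset.univ.filter
      (fun f : {f : Fin N → Fin n // Function.Injective f} => f.1 i = j), g (f.1 i)
      = (Finset.univ.filter
      (fun f : {f : Fin N → Fin n // Function.Injective f} => f.1 i = j)).card * g j := by
    rw [Finset.sum_congr rfl (fun f hf => by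
      rw [(Finset.mem_filter.mp hf).2]), Finset.sum_const, nsmul_eq_mul]
  rw [this, ← mul_assoc, ← Nat.cast_mul, card_fiber1_mul]

lemma card_fiber2 (i i' : Fin N) (j k j' k' : Fin n) (hjk : j ≠ k) (hj'k' : j' ≠ k') :
    (Finset.univ.filter
      (fun f : {f : Fin N → Fin n // Function.Injective f} => f.1 i = j ∧ f.1 i' = k)).card
    = (Finset.univ.filter
      (fun f : {f : Fin N → Fin n // Function.Injective f} => f.1 i = j' ∧ f.1 i' = k')).card := by
  set k₁ := Equiv.swap j j' k with hk₁
  set σ : Equiv.Perm (Fin n) := (Equiv.swap j j').trans (Equiv.swap k₁ k') with hσ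
  have hk₁j' : k₁ ≠ j' := by
    intro h
    exact hjk (((Equiv.swap j j').injective
      (by rw [← hk₁, h, Equiv.swap_apply_left] : (Equiv.swap j j') k = (Equiv.swap j j') j)).symm)
  have hσj : σ j = j' := by
    simp only [hσ, Equiv.trans_apply, Equiv.swap_apply_left]
    exact Equiv.swap_apply_of_ne_of_ne hk₁j'.symm hj'k'
  have hσk : σ k = k' := by
    simp only [hσ, Equiv.trans_apply, ← hk₁, Equiv.swap_apply_left]
  apply Finset.card_equiv (permComp σ)
  intro f
  simp only [Finset.mem_filter, Finset.mem_univ, true_and, permComp, Equiv.coe_fn_mk,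
    Function.comp_apply]
  constructor
  · rintro ⟨rfl, rfl⟩; exact ⟨hσj, hσk⟩
  · rintro ⟨h1, h2⟩
    exact ⟨σ.injective (by rw [h1, hσj]), σ.injective (by rw [h2, hσk])⟩

lemma card_fiber2_mul (i i' : Fin N) (hii : i ≠ i') (j k : Fin n) (hjk : j ≠ k) :
    (n * n - n) * (Finset.univ.filter
      (fun f : {f : Fin N → Fin n // Function.Injective f} => f.1 i = j ∧ f.1 i' = k)).card
    = Fintype.card {f : Fin N → Fin n // Function.Injective f} := by
  have h := Finset.card_eq_sum_card_fiberwise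
    (f := fun f : {f : Fin N → Fin n // Function.Injective f} => (f.1 i, f.1 i'))
    (s := Finset.univ) (t := (Finset.univ : Finset (Fin n)).offDiag)
    (fun f _ => Finset.mem_offDiag.mpr ⟨Finset.mem_univ _, Finset.mem_univ _,
      fun h => hii (f.2 h)⟩)
  rw [Finset.card_univ] at h
  rw [h]
  have hcongr : ∀ p ∈ (Finset.univ : Finset (Fin n)).offDiag,
      (Finset.univ.filter
        (fun f : {f : Fin N → Fin n // Function.Injective f} => (f.1 i, f.1 i') = p)).card
      = (Finset.univ.filter
        (fun f : {f : Fin N → Fin n // Function.Injective f} => f.1 i = j ∧ f.1 i' = k)).card := by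
    intro p hp
    obtain ⟨-, -, hne⟩ := Finset.mem_offDiag.mp hp
    have hset : Finset.univ.filter
        (fun f : {f : Fin N → Fin n // Function.Injective f} => (f.1 i, f.1 i') = p)
        = Finset.univ.filter
        (fun f : {f : Fin N → Fin n // Function.Injective f} => f.1 i = p.1 ∧ f.1 i' = p.2) := by
      ext f; simp [Prod.ext_iff]
    rw [hset]
    exact card_fiber2 i i' p.1 p.2 j k hne hjk
  rw [Finset.sum_congr rfl hcongr, Finset.sum_const, Finset.offDiag_card, Finset.card_univ,
    Fintype.card_fin, smul_eq_mul]

lemma sum_fiber2 (g h : Fin n → ℝ) (i i' : Fin N) (hii : i ≠ i') :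
    ((n : ℝ) * n - n) * ∑ f : {f : Fin N → Fin n // Function.Injective f}, g (f.1 i) * h (f.1 i')
    = (Fintype.card {f : Fin N → Fin n // Function.Injective f} : ℝ) *
        ∑ p ∈ (Finset.univ : Finset (Fin n)).offDiag, g p.1 * h p.2 := by
  have hmaps : ∀ f ∈ (Finset.univ : Finset {f : Fin N → Fin n // Function.Injective f}),
      (f.1 i, f.1 i') ∈ (Finset.univ : Finset (Fin n)).offDiag := fun f _ =>
    Finset.mem_offDiag.mpr ⟨Finset.mem_univ _, Finset.mem_univ _, fun hh => hii (f.2 hh)⟩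
  have hsum := Finset.sum_fiberwise_of_maps_to
    (g := fun f : {f : Fin N → Fin n // Function.Injective f} => (f.1 i, f.1 i'))
    hmaps (fun f => g (f.1 i) * h (f.1 i'))
  rw [← hsum, Finset.mul_sum, Finset.mul_sum]
  refine Finset.sum_congr rfl fun p hp => ?_
  obtain ⟨-, -, hne⟩ := Finset.mem_offDiag.mp hp
  have hconst : ∑ f ∈ Finset.univ.filter
      (fun f : {f : Fin N → Fin n // Function.Injective f} => (f.1 i, f.1 i') = p),
      g (f.1 i) * h (f.1 i')
      = ((Finset.univ.filter
        (fun f : {f : Fin N → Fin n // Function.Injective f} => (f.1 i, f.1 i') = p)).card : ℕ)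
        • (g p.1 * h p.2) :=
    Finset.sum_eq_card_nsmul (fun f hf => by
      have hfp := (Finset.mem_filter.mp hf).2
      rw [Prod.ext_iff] at hfp
      have h1 : f.1 i = p.1 := hfp.1
      have h2 : f.1 i' = p.2 := hfp.2
      rw [h1, h2])
  rw [hconst, nsmul_eq_mul, ← mul_assoc]
  congr 1
  have hcard : (Finset.univ.filter
      (fun f : {f : Fin N → Fin n // Function.Injective f} => (f.1 i, f.1 i') = p)).card
      = (Finset.univ.filter
      (fun f : {f : Fin N → Fin n // Function.Injective f} => f.1 i = p.1 ∧ f.1 i' = p.2)).card := by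
    congr 1
    ext f
    simp [Prod.ext_iff]
  have hm := card_fiber2_mul i i' hii p.1 p.2 hne
  rw [hcard]
  have hle : n ≤ n * n := Nat.le_mul_of_pos_left n p.1.pos
  rw [show ((n : ℝ) * n - n) = ((n * n - n : ℕ) : ℝ) by
    rw [Nat.cast_sub hle]; push_cast; ring, ← Nat.cast_mul, hm]

lemma quadform (n : ℕ) (A : Matrix (Fin n) (Fin n) ℝ) (j : Fin n) :
    unitVec n j ⬝ᵥ A.mulVec (unitVec n j) = n * A j j := by
  simp [unitVec, dotProduct, Matrix.mulVec, mul_ite, ite_mul, Finset.sum_ite_eq',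
    mul_comm, mul_assoc, mul_left_comm]

lemma sum_offDiag_sq {m : ℕ} (b : Fin m → ℝ) :
    ∑ p ∈ (Finset.univ : Finset (Fin m)).offDiag, b p.1 * b p.2
      = (∑ j, b j) ^ 2 - ∑ j, (b j) ^ 2 := by
  have h1 : (∑ j, b j) ^ 2 = ∑ p ∈ Finset.univ ×ˢ Finset.univ, b p.1 * b p.2 := by
    rw [sq, Finset.sum_mul_sum, Finset.sum_product]
  rw [h1, ← Finset.diag_union_offDiag (Finset.univ : Finset (Fin m)),
    Finset.sum_union (Finset.disjoint_diag_offDiag _), Finset.sum_diag]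
  simp [sq]

end Aux

/-- the variance of the unit vector trace estimator without replacement is
`Var(tr_{U₂}^N(A)) = ((n−N)/(N(n−1))) (n ∑ⱼ aⱼⱼ² − tr(A)²)`. -/
theorem unit_vector_without_replacement_variance (n N : ℕ) (A : Matrix (Fin n) (Fin n) ℝ)
    (hn : 2 ≤ n) (hN : 1 ≤ N) (hNn : N ≤ n) :
    ProbabilityTheory.variance (fun f => unitVectorEstimator n N A f.1)
        (withoutReplacementMeasure n N)
      = (((n : ℝ) - N) / ((N : ℝ) * ((n : ℝ) - 1))) *
          ((n : ℝ) * ∑ j : Fin n, (A j j) ^ 2 - A.trace ^ 2) := by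
  classical
  have hne : Nonempty {f : Fin N → Fin n // Function.Injective f} :=
    ⟨⟨Fin.castLE hNn, Fin.castLE_injective hNn⟩⟩
  have hP : IsProbabilityMeasure (withoutReplacementMeasure n N) := by
    constructor
    rw [withoutReplacementMeasure, Measure.smul_apply, Measure.count_univ, ENat.card_eq_coe_fintype_card, ENat.toENNReal_coe, smul_eq_mul,
      ENNReal.inv_mul_cancel (by exact_mod_cast Fintype.card_ne_zero) (by simp)]
  set P : ℝ := (Fintype.card {f : Fin N → Fin n // Function.Injective f} : ℝ) with hPdef
  have hP0 : 0 < P := by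
    rw [hPdef]
    exact_mod_cast Fintype.card_pos
  have hintegral : ∀ g : {f : Fin N → Fin n // Function.Injective f} → ℝ,
      ∫ x, g x ∂(withoutReplacementMeasure n N) = P⁻¹ * ∑ x, g x := by
    intro g
    rw [integral_fintype .of_finite, Finset.mul_sum]
    refine Finset.sum_congr rfl fun x _ => ?_
    simp [withoutReplacementMeasure, Measure.count_singleton, ENNReal.toReal_inv, hPdef]
  set t : ℝ := ∑ j : Fin n, A j j with htdef
  set s2 : ℝ := ∑ j : Fin n, (A j j) ^ 2 with hs2def
  have htr : A.trace = t := by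
    simp [Matrix.trace, Matrix.diag, htdef]
  -- the estimator in terms of diagonal entries
  have hX : ∀ f : {f : Fin N → Fin n // Function.Injective f},
      unitVectorEstimator n N A f.1 = ((n : ℝ) / N) * ∑ i : Fin N, A (f.1 i) (f.1 i) := by
    intro f
    unfold unitVectorEstimator
    rw [Finset.sum_congr rfl fun i _ => quadform n A (f.1 i), ← Finset.mul_sum]
    ring
  set B : ℝ := ∑ f : {f : Fin N → Fin n // Function.Injective f},
    ∑ i : Fin N, A (f.1 i) (f.1 i) with hBdef
  set C : ℝ := ∑ f : {f : Fin N → Fin n // Function.Injective f},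
    (∑ i : Fin N, A (f.1 i) (f.1 i)) ^ 2 with hCdef
  have hn0 : (n : ℝ) ≠ 0 := by positivity
  have hN0 : (N : ℝ) ≠ 0 := by positivity
  have hn1 : (n : ℝ) - 1 ≠ 0 := by
    have : (2 : ℝ) ≤ n := by exact_mod_cast hn
    linarith
  have hnn : (n : ℝ) * n - n ≠ 0 := by
    have h2 : (2 : ℝ) ≤ n := by exact_mod_cast hn
    nlinarith
  -- first moment sum
  have hB : (n : ℝ) * B = N * (P * t) := by
    rw [hBdef, Finset.sum_comm, Finset.mul_sum]
    rw [Finset.sum_congr rfl fun i _ => sum_fiber1 (fun j => A j j) i]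
    rw [Finset.sum_const, Finset.card_univ, Fintype.card_fin, nsmul_eq_mul, htdef, hPdef]
  -- second moment sum
  have hC : ((n : ℝ) * n - n) * C = (n - 1) * (N * (P * s2)) + ((N : ℝ) * N - N) * (P * (t ^ 2 - s2)) := by
    have hsplit : C = (∑ f : {f : Fin N → Fin n // Function.Injective f},
        ∑ i : Fin N, (A (f.1 i) (f.1 i)) ^ 2)
        + ∑ f : {f : Fin N → Fin n // Function.Injective f},
          ∑ p ∈ (Finset.univ : Finset (Fin N)).offDiag, A (f.1 p.1) (f.1 p.1) * A (f.1 p.2) (f.1 p.2) := by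
      rw [hCdef, ← Finset.sum_add_distrib]
      refine Finset.sum_congr rfl fun f _ => ?_
      have := sum_offDiag_sq (fun i => A (f.1 i) (f.1 i))
      linarith [this]
    have h1 : (n : ℝ) * ∑ f : {f : Fin N → Fin n // Function.Injective f},
        ∑ i : Fin N, (A (f.1 i) (f.1 i)) ^ 2 = N * (P * s2) := by
      rw [Finset.sum_comm, Finset.mul_sum]
      rw [Finset.sum_congr rfl fun i _ => sum_fiber1 (fun j => (A j j) ^ 2) i]
      rw [Finset.sum_const, Finset.card_univ, Fintype.card_fin, nsmul_eq_mul, hs2def, hPdef]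
    have h2 : ((n : ℝ) * n - n) * ∑ f : {f : Fin N → Fin n // Function.Injective f},
        ∑ p ∈ (Finset.univ : Finset (Fin N)).offDiag, A (f.1 p.1) (f.1 p.1) * A (f.1 p.2) (f.1 p.2)
        = ((N : ℝ) * N - N) * (P * (t ^ 2 - s2)) := by
      rw [Finset.sum_comm, Finset.mul_sum]
      have hterm : ∀ p ∈ (Finset.univ : Finset (Fin N)).offDiag,
          ((n : ℝ) * n - n) * ∑ f : {f : Fin N → Fin n // Function.Injective f},
            A (f.1 p.1) (f.1 p.1) * A (f.1 p.2) (f.1 p.2)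
          = P * (t ^ 2 - s2) := by
        intro p hp
        obtain ⟨-, -, hne'⟩ := Finset.mem_offDiag.mp hp
        rw [sum_fiber2 (fun j => A j j) (fun j => A j j) p.1 p.2 hne',
          sum_offDiag_sq (fun j => A j j), ← htdef, ← hs2def, ← hPdef]
      rw [Finset.sum_congr rfl hterm, Finset.sum_const, Finset.offDiag_card,
        Finset.card_univ, Fintype.card_fin, nsmul_eq_mul]
      rw [show ((N * N - N : ℕ) : ℝ) = (N : ℝ) * N - N by
        rw [Nat.cast_sub (Nat.le_mul_of_pos_left N (by omega))]; push_cast; ring]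
    rw [hsplit]
    rw [mul_add, h2]
    have : ((n : ℝ) * n - n) * ∑ f : {f : Fin N → Fin n // Function.Injective f},
        ∑ i : Fin N, (A (f.1 i) (f.1 i)) ^ 2 = (n - 1) * (N * (P * s2)) := by
      have hfac : ((n : ℝ) * n - n) = (n - 1) * n := by ring
      rw [hfac, mul_assoc, h1]
    rw [this]
  -- compute the variance
  rw [ProbabilityTheory.variance_eq_sub MemLp.of_discrete]
  have hsq : ∫ x, ((fun f : {f : Fin N → Fin n // Function.Injective f} =>
      unitVectorEstimator n N A f.1) ^ 2) x ∂(withoutReplacementMeasure n N)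
      = P⁻¹ * (((n : ℝ) / N) ^ 2 * C) := by
    rw [hintegral]
    congr 1
    rw [hCdef, Finset.mul_sum]
    refine Finset.sum_congr rfl fun f _ => ?_
    simp only [Pi.pow_apply]
    rw [hX f, mul_pow]
  have hmean : ∫ x, (fun f : {f : Fin N → Fin n // Function.Injective f} =>
      unitVectorEstimator n N A f.1) x ∂(withoutReplacementMeasure n N)
      = P⁻¹ * (((n : ℝ) / N) * B) := by
    rw [hintegral]
    congr 1
    rw [hBdef, Finset.mul_sum]
    exact Finset.sum_congr rfl fun f _ => hX f
  rw [hsq, hmean, htr]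
  have hBval : B = N * (P * t) / n := by
    rw [eq_div_iff hn0]; linarith [hB]
  have hCval : C = ((n - 1) * (N * (P * s2)) + ((N : ℝ) * N - N) * (P * (t ^ 2 - s2)))
      / ((n : ℝ) * n - n) := by
    rw [eq_div_iff hnn]; linarith [hC]
  rw [hBval, hCval]
  field_simp
  ring
end

section
/- Let A be an n×n real matrix with tr(A) > 0, define K_U := max_{i≠j} (n/tr(A)) |a_{ii} − a_{jj}|, and let ε, δ ∈ (0,1). If K_U > 0 and the sample size N satisfies N > (K_U²/2) ε⁻² ln(2/δ), then the uniform unit vector trace estimator with replacement satisfies Pr(|tr_{U₁}^N(A) − tr(A)| ≤ ε·tr(A)) ≥ 1 − δ. -/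
open MeasureTheory Matrix

open Real Finset

section AuxHoeffding
variable {n : ℕ}

lemma hasDerivAt_mgfSum (x : Fin n → ℝ) (p : Fin n → ℝ) (s : ℝ) :
    HasDerivAt (fun u => ∑ j, p j * Real.exp (u * x j))
      (∑ j, (p j * x j) * Real.exp (s * x j)) s := by
  have : ∀ j : Fin n, HasDerivAt (fun u => p j * Real.exp (u * x j))
      ((p j * x j) * Real.exp (s * x j)) s := by
    intro j
    have h1 : HasDerivAt (fun u : ℝ => u * x j) (x j) s := by
      simpa using (hasDerivAt_id s).mul_const (x j)
    have h2 := (h1.exp).const_mul (p j)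
    rw [show (p j * x j) * Real.exp (s * x j) = p j * (Real.exp (s * x j) * x j) by ring]
    exact h2
  simpa using HasDerivAt.fun_sum (fun j _ => this j)

/-- Finite Hoeffding's lemma. -/
lemma hoeffding_fin (x : Fin n → ℝ) (hn : 0 < n) (R : ℝ)
    (hR : ∀ j k, |x j - x k| ≤ R) (t : ℝ) (ht : 0 ≤ t) :
    ∑ j, Real.exp (t * x j) ≤
      (n : ℝ) * Real.exp (t * ((∑ j, x j) / n) + t ^ 2 * R ^ 2 / 8) := by
  haveI : Nonempty (Fin n) := ⟨⟨0, hn⟩⟩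
  set f : ℝ → ℝ := fun u => ∑ j, Real.exp (u * x j) with hf
  set f1 : ℝ → ℝ := fun u => ∑ j, x j * Real.exp (u * x j) with hf1
  set f2 : ℝ → ℝ := fun u => ∑ j, (x j)^2 * Real.exp (u * x j) with hf2
  have hfpos : ∀ u, 0 < f u := fun u =>
    Finset.sum_pos (fun j _ => Real.exp_pos _) univ_nonempty
  have hdf : ∀ u, HasDerivAt f (f1 u) u := by
    intro u
    have := hasDerivAt_mgfSum x (fun _ => 1) u
    simpa [hf, hf1] using this
  have hdf1 : ∀ u, HasDerivAt f1 (f2 u) u := by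
    intro u
    have := hasDerivAt_mgfSum x x u
    simpa [hf1, hf2, sq] using this
  obtain ⟨jmin, -, hjmin⟩ := Finset.exists_min_image univ x ⟨Classical.arbitrary _, mem_univ _⟩
  obtain ⟨jmax, -, hjmax⟩ := Finset.exists_max_image univ x ⟨Classical.arbitrary _, mem_univ _⟩
  set c : ℝ := (x jmin + x jmax) / 2 with hc
  have hxc : ∀ j, (x j - c)^2 ≤ R^2 / 4 := by
    intro j
    have h1 : x jmin ≤ x j := hjmin j (mem_univ j)
    have h2 : x j ≤ x jmax := hjmax j (mem_univ j)
    have h3 : x jmax - x jmin ≤ R := by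
      have := hR jmax jmin
      rwa [abs_of_nonneg (by linarith)] at this
    nlinarith [sq_nonneg (x j - c)]
  have hvar : ∀ u, f2 u * f u - (f1 u)^2 ≤ R^2 / 4 * (f u)^2 := by
    intro u
    have hexpand : ∑ j, (x j - c)^2 * Real.exp (u * x j)
        = f2 u - 2 * c * f1 u + c^2 * f u := by
      simp only [hf, hf1, hf2, Finset.mul_sum, ← Finset.sum_add_distrib,
        ← Finset.sum_sub_distrib]
      apply Finset.sum_congr rfl
      intro j _
      ring
    have hsum_le : ∑ j, (x j - c)^2 * Real.exp (u * x j) ≤ R^2/4 * f u := by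
      rw [hf, Finset.mul_sum]
      apply Finset.sum_le_sum
      intro j _
      exact mul_le_mul_of_nonneg_right (hxc j) (Real.exp_pos _).le
    rw [hexpand] at hsum_le
    nlinarith [sq_nonneg (f1 u - c * f u), (hfpos u)]
  set φ : ℝ → ℝ := fun u => f1 u / f u with hφ
  have hdφ : ∀ u, HasDerivAt φ ((f2 u * f u - (f1 u)^2) / (f u)^2) u := by
    intro u
    have h := (hdf1 u).div (hdf u) (hfpos u).ne'
    rw [show f2 u * f u - (f1 u)^2 = f2 u * f u - f1 u * f1 u by ring]
    exact h
  have hψ : ∀ u, (f2 u * f u - (f1 u)^2) / (f u)^2 ≤ R^2/4 := by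
    intro u
    rw [div_le_iff₀ (by positivity)]
    exact hvar u
  set m : ℝ := (∑ j, x j) / n with hm
  have hφ0 : φ 0 = m := by
    simp [hφ, hf1, hf, hm]
  have hφle : ∀ u, 0 ≤ u → φ u ≤ m + u * (R^2/4) := by
    intro u hu
    set g : ℝ → ℝ := fun v => m + v * (R^2/4) - φ v with hg
    have hdg : ∀ v, HasDerivAt g (R^2/4 - (f2 v * f v - (f1 v)^2) / (f v)^2) v := by
      intro v
      have h1 : HasDerivAt (fun v : ℝ => m + v * (R^2/4)) (R^2/4) v := by
        simpa using ((hasDerivAt_id v).mul_const (R^2/4)).const_add m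
      simpa using h1.fun_sub (hdφ v)
    have hmono : MonotoneOn g (Set.Icc 0 u) :=
      monotoneOn_of_deriv_nonneg (convex_Icc 0 u)
        (fun v _ => ((hdg v).differentiableAt.continuousAt).continuousWithinAt)
        (fun v _ => (hdg v).differentiableAt.differentiableWithinAt)
        (fun v _ => by rw [(hdg v).deriv]; linarith [hψ v])
    have h0 : g 0 = 0 := by simp [hg, hφ0]
    have := hmono (Set.left_mem_Icc.2 hu) (Set.right_mem_Icc.2 hu) hu
    rw [h0] at this
    simp only [hg] at this ⊢
    linarith
  set G : ℝ → ℝ := fun u => Real.log (f u) with hG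
  have hdG : ∀ u, HasDerivAt G (φ u) u := fun u => (hdf u).log (hfpos u).ne'
  set H : ℝ → ℝ := fun v => G 0 + m * v + v^2 * (R^2/8) - G v with hH
  have hdH : ∀ v, HasDerivAt H (m + v * (R^2/4) - φ v) v := by
    intro v
    have h1 : HasDerivAt (fun v : ℝ => G 0 + m * v + v^2 * (R^2/8))
        (m + v * (R^2/4)) v := by
      have h2 : HasDerivAt (fun v : ℝ => G 0 + m * v + v^2 * (R^2/8))
          (0 + (m * 1) + ((2:ℕ) * v^1 * (R^2/8))) v :=
        ((hasDerivAt_const v (G 0)).add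
          ((hasDerivAt_id v).const_mul m)).add
          ((hasDerivAt_pow 2 v).mul_const (R^2/8))
      convert h2 using 1
      push_cast
      ring
    simpa using h1.fun_sub (hdG v)
  have hmono : MonotoneOn H (Set.Icc 0 t) :=
    monotoneOn_of_deriv_nonneg (convex_Icc 0 t)
      (fun v _ => ((hdH v).differentiableAt.continuousAt).continuousWithinAt)
      (fun v _ => (hdH v).differentiableAt.differentiableWithinAt)
      (fun v hv => by
        rw [(hdH v).deriv]
        have hv0 : 0 ≤ v := by
          simp only [interior_Icc, Set.mem_Ioo] at hv
          linarith [hv.1]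
        linarith [hφle v hv0])
  have h0 : H 0 = 0 := by simp [hH]
  have hHt : 0 ≤ H t := by
    have := hmono (Set.left_mem_Icc.2 ht) (Set.right_mem_Icc.2 ht) ht
    rwa [h0] at this
  have hG0 : G 0 = Real.log n := by simp [hG, hf]
  have hGt : G t ≤ Real.log n + (t * m + t^2 * R^2/8) := by
    simp only [hH] at hHt
    rw [← hG0]
    linarith
  calc f t = Real.exp (G t) := (Real.exp_log (hfpos t)).symm
    _ ≤ Real.exp (Real.log n + (t * m + t^2 * R^2/8)) := Real.exp_le_exp.2 hGt
    _ = (n:ℝ) * Real.exp (t * m + t^2 * R^2/8) := by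
        rw [Real.exp_add, Real.exp_log (by exact_mod_cast hn)]

set_option maxHeartbeats 1000000 in
private lemma chernoff_count_s10 (x : Fin n → ℝ) (hn : 0 < n) (N : ℕ) (R : ℝ)
    (hR : ∀ j k, |x j - x k| ≤ R) (s t : ℝ) (ht : 0 ≤ t) :
    ((univ.filter (fun f : Fin N → Fin n =>
        (N : ℝ) * ((∑ j, x j) / n) + s ≤ ∑ i, x (f i))).card : ℝ)
      ≤ (n : ℝ) ^ N * Real.exp ((N : ℝ) * (t ^ 2 * R ^ 2 / 8) - t * s) := by
  have hchain : ((univ.filter (fun f : Fin N → Fin n =>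
        (N : ℝ) * ((∑ j, x j) / n) + s ≤ ∑ i, x (f i))).card : ℝ)
        * Real.exp (t * ((N : ℝ) * ((∑ j, x j) / n) + s))
      ≤ (n : ℝ) ^ N * Real.exp ((N : ℝ) * (t * ((∑ j, x j) / n) + t ^ 2 * R ^ 2 / 8)) := by
    calc ((univ.filter (fun f : Fin N → Fin n =>
        (N : ℝ) * ((∑ j, x j) / n) + s ≤ ∑ i, x (f i))).card : ℝ)
        * Real.exp (t * ((N : ℝ) * ((∑ j, x j) / n) + s))
        = ∑ _f ∈ univ.filter (fun f : Fin N → Fin n =>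
            (N : ℝ) * ((∑ j, x j) / n) + s ≤ ∑ i, x (f i)),
            Real.exp (t * ((N : ℝ) * ((∑ j, x j) / n) + s)) := by
          rw [Finset.sum_const, nsmul_eq_mul]
      _ ≤ ∑ f ∈ univ.filter (fun f : Fin N → Fin n =>
            (N : ℝ) * ((∑ j, x j) / n) + s ≤ ∑ i, x (f i)),
            Real.exp (t * ∑ i, x (f i)) := by
          apply Finset.sum_le_sum
          intro f hf
          apply Real.exp_le_exp.2
          apply mul_le_mul_of_nonneg_left _ ht
          exact (Finset.mem_filter.1 hf).2
      _ ≤ ∑ f : Fin N → Fin n, Real.exp (t * ∑ i, x (f i)) :=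
          Finset.sum_le_sum_of_subset_of_nonneg (Finset.filter_subset _ _)
            (fun f _ _ => (Real.exp_pos _).le)
      _ = ∑ f : Fin N → Fin n, ∏ i, Real.exp (t * x (f i)) := by
          apply Finset.sum_congr rfl
          intro f _
          rw [Finset.mul_sum, Real.exp_sum]
      _ = (∑ j, Real.exp (t * x j)) ^ N := (Fintype.sum_pow (fun j => Real.exp (t * x j)) N).symm
      _ ≤ ((n : ℝ) * Real.exp (t * ((∑ j, x j) / n) + t ^ 2 * R ^ 2 / 8)) ^ N := by
          apply pow_le_pow_left₀ (Finset.sum_nonneg fun j _ => (Real.exp_pos _).le)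
          exact hoeffding_fin x hn R hR t ht
      _ = (n : ℝ) ^ N * Real.exp ((N : ℝ) * (t * ((∑ j, x j) / n) + t ^ 2 * R ^ 2 / 8)) := by
          rw [mul_pow, ← Real.exp_nat_mul]
  have h2 := (le_div_iff₀ (Real.exp_pos (t * ((N : ℝ) * ((∑ j, x j) / n) + s)))).2 hchain
  calc ((univ.filter (fun f : Fin N → Fin n =>
        (N : ℝ) * ((∑ j, x j) / n) + s ≤ ∑ i, x (f i))).card : ℝ) ≤ _ := h2
    _ = (n : ℝ) ^ N * Real.exp ((N : ℝ) * (t ^ 2 * R ^ 2 / 8) - t * s) := by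
        rw [mul_div_assoc, ← Real.exp_sub]
        congr 1
        ring

private lemma quad_eq (n : ℕ) (A : Matrix (Fin n) (Fin n) ℝ) (j : Fin n) :
    (unitVec n j) ⬝ᵥ A.mulVec (unitVec n j) = n * A j j := by
  simp only [unitVec, dotProduct, Matrix.mulVec, mul_ite, mul_one, mul_zero, ite_mul, zero_mul,
    Finset.sum_ite_eq', Finset.mem_univ, if_true]
  rw [← mul_assoc, mul_comm (Real.sqrt n) (A j j), mul_assoc,
    Real.mul_self_sqrt (Nat.cast_nonneg n)]
  ring

private lemma measure_count_filter_bound (n N : ℕ) (hn : 0 < n) (δ : ℝ) (hδ1 : δ < 1) (P : (Fin N → Fin n) → Prop)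
    [DecidablePred P]
    (hgoodge : (1 - δ) * (n:ℝ) ^ N ≤ ((univ.filter P).card : ℝ)) :
    withReplacementMeasure n N {f | P f} ≥ ENNReal.ofReal (1 - δ) := by
  classical
  rw [withReplacementMeasure, Measure.smul_apply, smul_eq_mul]
  have hfin : ({f : Fin N → Fin n | P f}).Finite := Set.toFinite _
  rw [Measure.count_apply_finite _ hfin]
  have hfeq : hfin.toFinset = univ.filter P := by
    ext f
    simp [Set.Finite.mem_toFinset]
  rw [hfeq]
  have hcard : (Fintype.card (Fin N → Fin n) : ENNReal) = ((n ^ N : ℕ) : ENNReal) := by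
    norm_cast
    simp [Fintype.card_fun]
  rw [hcard, ge_iff_le, ← ENNReal.div_eq_inv_mul,
    ENNReal.le_div_iff_mul_le (Or.inl (by exact_mod_cast (pow_pos hn N).ne'))
      (Or.inl (ENNReal.natCast_ne_top _))]
  rw [← ENNReal.ofReal_natCast (univ.filter P).card, ← ENNReal.ofReal_natCast (n ^ N),
    ← ENNReal.ofReal_mul (by linarith : (0:ℝ) ≤ 1 - δ)]
  apply ENNReal.ofReal_le_ofReal
  push_cast
  exact hgoodge

end AuxHoeffding

set_option maxHeartbeats 1000000 in
/-- sufficient bound for the unit vector estimator with replacement.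
With `K_U = max_{i ≠ j} (n / tr(A)) |a_{ii} − a_{jj}| > 0`, if
`N > (K_U²/2) ε⁻² ln(2/δ)` then `Pr(|tr_{U₁}^N(A) − tr(A)| ≤ ε tr(A)) ≥ 1 − δ`. -/
theorem unit_vector_with_replacement_bound (n N : ℕ) (A : Matrix (Fin n) (Fin n) ℝ)
    (htr : 0 < A.trace)
    (KU : ℝ)
    (hKU : KU = ⨆ p : {p : Fin n × Fin n // p.1 ≠ p.2},
      ((n : ℝ) / A.trace) * |A p.1.1 p.1.1 - A p.1.2 p.1.2|)
    (hKUpos : 0 < KU)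
    (ε δ : ℝ) (hε : ε ∈ Set.Ioo (0 : ℝ) 1) (hδ : δ ∈ Set.Ioo (0 : ℝ) 1)
    (hN : (N : ℝ) > KU ^ 2 / 2 / ε ^ 2 * Real.log (2 / δ)) :
    withReplacementMeasure n N
        {f | |unitVectorEstimator n N A f - A.trace| ≤ ε * A.trace}
      ≥ ENNReal.ofReal (1 - δ) := by
  classical
  obtain ⟨hε0, hε1⟩ := hε
  obtain ⟨hδ0, hδ1⟩ := hδ
  -- n is positive
  have hn : 0 < n := by
    by_contra h
    push_neg at h
    interval_cases n
    · haveI : IsEmpty {p : Fin 0 × Fin 0 // p.1 ≠ p.2} := by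
        constructor; rintro ⟨⟨i, j⟩, -⟩; exact i.elim0
      rw [Real.iSup_of_isEmpty] at hKU
      linarith [hKU ▸ hKUpos]
  set μ : ℝ := A.trace with hμ
  set x : Fin n → ℝ := fun j => (n : ℝ) * A j j with hx
  have hμ0 : μ ≠ 0 := ne_of_gt htr
  have hn0 : (n : ℝ) ≠ 0 := Nat.cast_ne_zero.2 hn.ne'
  -- mean of x is μ
  have htrace : μ = ∑ j, A j j := by simp [hμ, Matrix.trace, Matrix.diag]
  have hmean : (∑ j, x j) / (n : ℝ) = μ := by
    rw [hx]
    simp only [← Finset.mul_sum]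
    rw [htrace]
    field_simp
  have hmean' : (∑ j, (-x) j) / (n : ℝ) = -μ := by
    simp only [Pi.neg_apply, Finset.sum_neg_distrib, neg_div, hmean]
  -- the pairwise gap bound
  set R : ℝ := KU * μ with hR
  have hRpos : 0 < R := mul_pos hKUpos htr
  have hgap : ∀ j k : Fin n, |x j - x k| ≤ R := by
    intro j k
    rcases eq_or_ne j k with rfl | hjk
    · simpa using hRpos.le
    · have hb : BddAbove (Set.range fun p : {p : Fin n × Fin n // p.1 ≠ p.2} =>
          ((n : ℝ) / μ) * |A p.1.1 p.1.1 - A p.1.2 p.1.2|) :=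
        Set.Finite.bddAbove (Set.finite_range _)
      have hle := le_ciSup hb ⟨(j, k), hjk⟩
      rw [← hKU] at hle
      have : ((n : ℝ) / μ) * |A j j - A k k| ≤ KU := hle
      have h2 : (n : ℝ) * |A j j - A k k| ≤ KU * μ := by
        rw [div_mul_eq_mul_div, div_le_iff₀ htr] at this
        linarith
      have hxd : x j - x k = (n : ℝ) * (A j j - A k k) := by rw [hx]; ring
      calc |x j - x k| = (n : ℝ) * |A j j - A k k| := by
            rw [hxd, abs_mul, Nat.abs_cast]
        _ ≤ R := h2
  -- choose t and bound the tail exponent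
  set t : ℝ := 4 * ε * μ / R ^ 2 with ht
  have ht0 : 0 ≤ t := by positivity
  have hexpval : (N : ℝ) * (t ^ 2 * R ^ 2 / 8) - t * ((N : ℝ) * (ε * μ))
      = -(2 * N * ε ^ 2 / KU ^ 2) := by
    rw [ht, hR]
    field_simp
    ring
  have hKey : Real.exp (-(2 * N * ε ^ 2 / KU ^ 2)) < δ / 2 := by
    rw [← Real.exp_log (by positivity : (0:ℝ) < δ / 2)]
    apply Real.exp_lt_exp.2
    have hlog : Real.log (δ / 2) = -Real.log (2 / δ) := by
      rw [← Real.log_inv]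
      congr 1
      field_simp
    rw [hlog, neg_lt_neg_iff]
    have h2ε : 0 < ε ^ 2 := by positivity
    have hK2 : 0 < KU ^ 2 := by positivity
    rw [lt_div_iff₀ hK2]
    rw [div_div, div_mul_eq_mul_div] at hN
    have hN2 := (div_lt_iff₀ (by positivity : (0:ℝ) < 2 * ε ^ 2)).1 hN
    nlinarith [hN2]
  -- N is positive
  have hNR : (0:ℝ) < N := by
    have hlogpos : 0 < Real.log (2 / δ) := Real.log_pos (by
      rw [lt_div_iff₀ hδ0]; linarith)
    have : 0 < KU ^ 2 / 2 / ε ^ 2 * Real.log (2 / δ) := by positivity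
    linarith
  -- estimator in terms of x
  have hest : ∀ f : Fin N → Fin n,
      unitVectorEstimator n N A f = (1 / (N:ℝ)) * ∑ i, x (f i) := by
    intro f
    unfold unitVectorEstimator
    congr 1
    exact Finset.sum_congr rfl (fun i _ => by rw [quad_eq])
  have hgap' : ∀ j k : Fin n, |(-x) j - (-x) k| ≤ R := by
    intro j k
    have e : (-x) j - (-x) k = x k - x j := by simp [Pi.neg_apply]; ring
    rw [e]
    exact hgap k j
  -- the two tail bounds
  have hup := chernoff_count_s10 x hn N R hgap ((N:ℝ) * (ε * μ)) t ht0
  have hdown := chernoff_count_s10 (-x) hn N R hgap' ((N:ℝ) * (ε * μ)) t ht0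
  rw [hexpval] at hup hdown
  have hhalf : (n:ℝ) ^ N * Real.exp (-(2 * N * ε ^ 2 / KU ^ 2)) < (n:ℝ)^N * (δ/2) :=
    mul_lt_mul_of_pos_left hKey (by positivity)
  -- bad set inclusion
  set badF := univ.filter
    (fun f : Fin N → Fin n => ¬ |unitVectorEstimator n N A f - μ| ≤ ε * μ) with hbadF
  set Bp := univ.filter (fun f : Fin N → Fin n =>
      (N : ℝ) * ((∑ j, x j) / n) + (N:ℝ) * (ε * μ) ≤ ∑ i, x (f i)) with hBp
  set Bm := univ.filter (fun f : Fin N → Fin n =>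
      (N : ℝ) * ((∑ j, (-x) j) / n) + (N:ℝ) * (ε * μ) ≤ ∑ i, (-x) (f i)) with hBm
  have hsub : badF ⊆ Bp ∪ Bm := by
    intro f hf
    rw [hbadF, Finset.mem_filter] at hf
    have habs : ε * μ < |unitVectorEstimator n N A f - μ| := lt_of_not_ge hf.2
    rw [Finset.mem_union, hBp, hBm, Finset.mem_filter, Finset.mem_filter, hmean, hmean']
    rw [hest f] at habs
    have hSS : ∑ i, x (f i) = (N:ℝ) * (1 / (N:ℝ) * ∑ i, x (f i)) := by
      field_simp
    rcases lt_abs.1 habs with h | h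
    · left
      refine ⟨Finset.mem_univ f, ?_⟩
      rw [hSS]
      linarith [mul_lt_mul_of_pos_left h hNR]
    · right
      refine ⟨Finset.mem_univ f, ?_⟩
      have hneg : ∑ i, (-x) (f i) = -∑ i, x (f i) := by simp
      rw [hneg, hSS]
      linarith [mul_lt_mul_of_pos_left h hNR]
  have hbadlt : (badF.card : ℝ) < (n:ℝ) ^ N * δ := by
    have h1 : (badF.card : ℝ) ≤ (Bp.card : ℝ) + (Bm.card : ℝ) := by
      have := Finset.card_le_card hsub
      have h2 := Finset.card_union_le Bp Bm
      exact_mod_cast le_trans this h2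
    calc (badF.card : ℝ) ≤ (Bp.card : ℝ) + (Bm.card : ℝ) := h1
      _ < (n:ℝ)^N * (δ/2) + (n:ℝ)^N * (δ/2) := by
          apply add_lt_add_of_le_of_lt (le_trans hup hhalf.le) (lt_of_le_of_lt hdown hhalf)
      _ = (n:ℝ)^N * δ := by ring
  -- good set count
  set goodF := univ.filter
    (fun f : Fin N → Fin n => |unitVectorEstimator n N A f - μ| ≤ ε * μ) with hgoodF
  have hsplit : goodF.card + badF.card = n ^ N := by
    rw [hgoodF, hbadF, Finset.card_filter_add_card_filter_not]
    simp [Fintype.card_fun]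
  have hgoodge : (1 - δ) * (n:ℝ) ^ N ≤ (goodF.card : ℝ) := by
    have hc : (goodF.card : ℝ) = (n:ℝ)^N - (badF.card : ℝ) := by
      have h := congrArg (Nat.cast : ℕ → ℝ) hsplit
      push_cast at h
      linarith
    rw [hc]
    nlinarith [hbadlt]
  exact measure_count_filter_bound n N hn δ hδ1 _ hgoodge
end

section
/- Let A be an n×n real symmetric positive semi-definite matrix with tr(A) > 0 and eigenvalues λ_1, …, λ_n ≥ 0. For the Gaussian trace estimator and any t > 0 with 2λ_j t < 1 for all j, the lower-tail probability satisfies Pr( tr_G^N(A) ≤ (1−ε) tr(A) ) ≤ exp{ t N (1−ε) tr(A) } · Π_{j=1}^n (1 + 2 λ_j t)^{−N/2}, for any ε ∈ (0,1). -/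
open MeasureTheory Matrix Real ProbabilityTheory
open scoped ENNReal

/-- The Gaussian trace estimator `tr_G^N(A) = (1/N) ∑ᵢ wᵢᵗ A wᵢ`, where the `N`
Gaussian vectors `wᵢ` are encoded by a point `ω` of the sample space
`Fin N → Fin n → ℝ`. -/
noncomputable def gaussianEstimator (n N : ℕ) (A : Matrix (Fin n) (Fin n) ℝ)
    (ω : Fin N → Fin n → ℝ) : ℝ :=
  (1 / (N : ℝ)) * ∑ i : Fin N, (ω i) ⬝ᵥ A.mulVec (ω i)

/-- The law of `N` independent random vectors in `ℝⁿ`, each with i.i.d. standard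
normal components. -/
noncomputable def gaussianVectorsMeasure (n N : ℕ) : Measure (Fin N → Fin n → ℝ) :=
  Measure.pi fun _ : Fin N => Measure.pi fun _ : Fin n => ProbabilityTheory.gaussianReal 0 1

/-- Tonelli for finitely many factors, lintegral version. -/
lemma lintegral_pi_fin {n : ℕ} {E : Type*} [MeasurableSpace E] (μ : Fin n → Measure E)
    [∀ i, SigmaFinite (μ i)] (f : Fin n → E → ℝ≥0∞) (hf : ∀ i, Measurable (f i)) :
    ∫⁻ x, ∏ i, f i (x i) ∂Measure.pi μ = ∏ i, ∫⁻ x, f i x ∂(μ i) := by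
  induction n with
  | zero => simp
  | succ n ih =>
    have hmp := (MeasureTheory.measurePreserving_piFinSuccAbove μ 0).symm
    have hmeas : Measurable fun x : Fin (n + 1) → E => ∏ i, f i (x i) :=
      Finset.measurable_prod _ fun i _ => (hf i).comp (measurable_pi_apply i)
    rw [← hmp.lintegral_comp hmeas]
    simp_rw [MeasurableEquiv.piFinSuccAbove_symm_apply, Fin.insertNthEquiv,
      Fin.prod_univ_succ, Fin.insertNth_zero, Equiv.coe_fn_mk, Fin.cons_zero, Fin.cons_succ,
      Fin.zero_succAbove, cast_eq]
    have hg : Measurable fun y : Fin n → E => ∏ i, f i.succ (y i) :=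
      Finset.measurable_prod _ fun i _ => (hf i.succ).comp (measurable_pi_apply i)
    rw [lintegral_prod_mul (f := f 0) (g := fun y : Fin n → E => ∏ i, f i.succ (y i))
      (hf 0).aemeasurable hg.aemeasurable]
    rw [ih (fun i => μ i.succ) (fun i => f i.succ) (fun i => hf i.succ)]

lemma gaussian_pi_eq_withDensity (n : ℕ) :
    (Measure.pi fun _ : Fin n => gaussianReal 0 1) =
      (volume : Measure (Fin n → ℝ)).withDensity
        (fun x => ∏ i, gaussianPDF 0 1 (x i)) := by
  have hf : Measurable (gaussianPDF 0 1) := measurable_gaussianPDF 0 1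
  refine Measure.pi_eq fun s hs => ?_
  rw [withDensity_apply _ (MeasurableSet.univ_pi hs),
    ← lintegral_indicator (MeasurableSet.univ_pi hs)]
  have hind : ∀ x : Fin n → ℝ,
      (Set.pi Set.univ s).indicator (fun x => ∏ i, gaussianPDF 0 1 (x i)) x
        = ∏ i, (s i).indicator (gaussianPDF 0 1) (x i) := by
    intro x
    by_cases hx : x ∈ Set.pi Set.univ s
    · rw [Set.indicator_of_mem hx]
      exact Finset.prod_congr rfl fun i _ =>
        (Set.indicator_of_mem (hx i (Set.mem_univ i)) _).symm
    · rw [Set.indicator_of_notMem hx]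
      rw [Set.mem_pi] at hx
      push_neg at hx
      obtain ⟨i, _, hi⟩ := hx
      exact (Finset.prod_eq_zero (Finset.mem_univ i) (Set.indicator_of_notMem hi _)).symm
  simp_rw [hind]
  rw [volume_pi, lintegral_pi_fin _ _ (fun i => hf.indicator (hs i))]
  refine Finset.prod_congr rfl fun i _ => ?_
  rw [lintegral_indicator (hs i), ← withDensity_apply _ (hs i),
    ← gaussianReal_of_var_ne_zero 0 one_ne_zero]

lemma map_withDensity_comp {α β : Type*} [MeasurableSpace α] [MeasurableSpace β]
    (μ : Measure α) (f : α → β) (hf : Measurable f) (g : β → ℝ≥0∞) (hg : Measurable g) :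
    Measure.map f (μ.withDensity (g ∘ f)) = (Measure.map f μ).withDensity g := by
  ext s hs
  rw [Measure.map_apply (by fun_prop) hs, withDensity_apply _ hs,
    withDensity_apply _ (hf hs), ← lintegral_indicator (hf hs), ← lintegral_indicator hs,
    lintegral_map (hg.indicator hs) hf]
  refine lintegral_congr fun x => ?_
  by_cases hx : f x ∈ s
  · rw [Set.indicator_of_mem hx, Set.indicator_of_mem (show x ∈ f ⁻¹' s from hx)]
    rfl
  · rw [Set.indicator_of_notMem hx, Set.indicator_of_notMem (show x ∉ f ⁻¹' s from hx)]

lemma measurable_mulVec {n : ℕ} (U : Matrix (Fin n) (Fin n) ℝ) :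
    Measurable fun w : Fin n → ℝ => U.mulVec w := by
  refine measurable_pi_lambda _ fun i => ?_
  simpa [Matrix.mulVec, dotProduct] using
    Finset.measurable_sum Finset.univ fun j _ => measurable_const.mul (measurable_pi_apply j)

lemma prod_gaussianPDF_eq {n : ℕ} (x : Fin n → ℝ) :
    ∏ i, gaussianPDF 0 1 (x i)
      = ENNReal.ofReal ((Real.sqrt (2 * π))⁻¹ ^ n * Real.exp (-(∑ i, x i ^ 2) / 2)) := by
  have hpdf : ∀ z : ℝ, gaussianPDF 0 1 z
      = ENNReal.ofReal ((Real.sqrt (2 * π))⁻¹ * Real.exp (-(z ^ 2) / 2)) := by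
    intro z
    simp [gaussianPDF, gaussianPDFReal]
  simp_rw [hpdf]
  rw [← ENNReal.ofReal_prod_of_nonneg (fun i _ => by positivity)]
  congr 1
  rw [Finset.prod_mul_distrib, Finset.prod_const, ← Real.exp_sum]
  simp only [Finset.card_univ, Fintype.card_fin]
  congr 1
  rw [← Finset.sum_neg_distrib, ← Finset.sum_div, Finset.sum_neg_distrib]

lemma dotProduct_mulVec_self {n : ℕ} (U : Matrix (Fin n) (Fin n) ℝ)
    (hU : Uᵀ * U = 1) (y : Fin n → ℝ) :
    ∑ i, (U.mulVec y) i ^ 2 = ∑ i, y i ^ 2 := by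
  have h1 : (U.mulVec y) ⬝ᵥ (U.mulVec y) = y ⬝ᵥ y := by
    calc (U.mulVec y) ⬝ᵥ (U.mulVec y) = ((U.mulVec y) ᵥ* U) ⬝ᵥ y :=
          Matrix.dotProduct_mulVec _ _ _
      _ = (Uᵀ *ᵥ (U *ᵥ y)) ⬝ᵥ y := by rw [Matrix.mulVec_transpose]
      _ = ((Uᵀ * U) *ᵥ y) ⬝ᵥ y := by rw [Matrix.mulVec_mulVec]
      _ = y ⬝ᵥ y := by rw [hU, Matrix.one_mulVec]
  simpa [dotProduct, pow_two] using h1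

lemma map_mulVec_gaussianPi {n : ℕ} (U : Matrix (Fin n) (Fin n) ℝ) (hU : Uᵀ * U = 1) :
    Measure.map U.mulVec (Measure.pi fun _ : Fin n => gaussianReal 0 1)
      = Measure.pi fun _ : Fin n => gaussianReal 0 1 := by
  have h1 : U.det * U.det = 1 := by
    have := congrArg Matrix.det hU
    rwa [Matrix.det_mul, Matrix.det_transpose, Matrix.det_one] at this
  have hdet : U.det ≠ 0 := by
    intro h; rw [h, mul_zero] at h1; exact zero_ne_one h1
  have habs : |U.det| = 1 := by nlinarith [sq_abs U.det, abs_nonneg U.det]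
  set φ : (Fin n → ℝ) → ℝ≥0∞ := fun x => ∏ i, gaussianPDF 0 1 (x i) with hφ
  have hφm : Measurable φ := Finset.measurable_prod _ fun i _ =>
    (measurable_gaussianPDF 0 1).comp (measurable_pi_apply i)
  have hcomp : φ ∘ U.mulVec = φ := by
    funext y
    simp only [Function.comp_apply, hφ]
    rw [prod_gaussianPDF_eq, prod_gaussianPDF_eq, dotProduct_mulVec_self U hU]
  have hUm : U.mulVec = ⇑(Matrix.toLin' U) := by
    funext v; rw [Matrix.toLin'_apply]
  rw [gaussian_pi_eq_withDensity]
  calc Measure.map U.mulVec (volume.withDensity φ)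
      = Measure.map U.mulVec (volume.withDensity (φ ∘ U.mulVec)) := by rw [hcomp]
    _ = (Measure.map U.mulVec volume).withDensity φ :=
        map_withDensity_comp _ _ (measurable_mulVec U) _ hφm
    _ = volume.withDensity φ := by
        rw [hUm, Real.map_matrix_volume_pi_eq_smul_volume_pi hdet, abs_inv, habs]
        norm_num

lemma lintegral_exp_neg_mul_sq_gaussian {c : ℝ} (hc : 0 ≤ c) :
    ∫⁻ x, ENNReal.ofReal (Real.exp (-(c * x ^ 2))) ∂(gaussianReal 0 1)
      = ENNReal.ofReal ((1 + 2 * c) ^ (-(1 : ℝ) / 2)) := by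
  have hb : (0 : ℝ) < c + 1 / 2 := by linarith
  have hgm : Measurable fun x : ℝ => ENNReal.ofReal (Real.exp (-(c * x ^ 2))) := by
    fun_prop
  rw [gaussianReal_of_var_ne_zero 0 one_ne_zero,
    lintegral_withDensity_eq_lintegral_mul _ (measurable_gaussianPDF 0 1) hgm]
  have hpt : ∀ x : ℝ, (gaussianPDF 0 1 * fun x => ENNReal.ofReal (Real.exp (-(c * x ^ 2)))) x
      = ENNReal.ofReal ((Real.sqrt (2 * π))⁻¹ * Real.exp (-(c + 1 / 2) * x ^ 2)) := by
    intro x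
    simp only [Pi.mul_apply, gaussianPDF, gaussianPDFReal]
    rw [← ENNReal.ofReal_mul (by positivity)]
    congr 1
    simp only [NNReal.coe_one, mul_one, sub_zero]
    rw [mul_assoc, ← Real.exp_add]
    ring_nf
  simp_rw [hpt]
  have hint : Integrable fun x : ℝ => (Real.sqrt (2 * π))⁻¹ * Real.exp (-(c + 1 / 2) * x ^ 2) :=
    (integrable_exp_neg_mul_sq hb).const_mul _
  rw [← ofReal_integral_eq_lintegral_ofReal hint
    (Filter.Eventually.of_forall fun x => by positivity)]
  congr 1
  rw [integral_const_mul, integral_gaussian]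
  have hexp : (-1 : ℝ) / 2 = -(1 / 2) := by norm_num
  rw [hexp, Real.rpow_neg (by linarith : (0:ℝ) ≤ 1 + 2 * c), ← Real.sqrt_eq_rpow]
  rw [← Real.sqrt_inv, ← Real.sqrt_inv, ← Real.sqrt_mul (by positivity)]
  congr 1
  have hπ := Real.pi_pos
  field_simp
  ring

lemma lintegral_exp_neg_quadratic_form {n : ℕ} (A : Matrix (Fin n) (Fin n) ℝ)
    (hA : A.PosSemidef) {t : ℝ} (ht : 0 < t) :
    ∫⁻ w, ENNReal.ofReal (Real.exp (-(t * (w ⬝ᵥ A.mulVec w))))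
        ∂(Measure.pi fun _ : Fin n => gaussianReal 0 1)
      = ∏ j, ENNReal.ofReal ((1 + 2 * hA.1.eigenvalues j * t) ^ (-(1 : ℝ) / 2)) := by
  classical
  set V : Matrix (Fin n) (Fin n) ℝ := (hA.1.eigenvectorUnitary : Matrix (Fin n) (Fin n) ℝ)
    with hV
  set lam := hA.1.eigenvalues with hlam
  set W : Matrix (Fin n) (Fin n) ℝ := star V with hWdef
  have hVt : Vᵀ = W := by
    rw [hWdef, Matrix.star_eq_conjTranspose]
    ext i j
    simp [Matrix.conjTranspose_apply]
  have hVW : V * W = 1 := by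
    rw [hWdef]
    exact (Matrix.mem_unitaryGroup_iff).mp (hA.1.eigenvectorUnitary).2
  have hW : Wᵀ * W = 1 := by
    rw [← hVt, Matrix.transpose_transpose, hVt, hVW]
  have hQ : ∀ w : Fin n → ℝ, w ⬝ᵥ A.mulVec w = ∑ j, lam j * (W.mulVec w j) ^ 2 := by
    intro w
    conv_lhs => rw [hA.1.spectral_theorem]
    have hofReal : (RCLike.ofReal ∘ hA.1.eigenvalues : Fin n → ℝ) = lam := by
      funext j; simp [hlam]
    rw [Unitary.conjStarAlgAut_apply, hofReal, ← hWdef, ← hV]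
    rw [← Matrix.mulVec_mulVec, ← Matrix.mulVec_mulVec, Matrix.dotProduct_mulVec,
      ← Matrix.mulVec_transpose, hVt]
    simp [dotProduct, Matrix.mulVec_diagonal]
    exact Finset.sum_congr rfl fun j _ => by ring
  simp_rw [hQ]
  have hexp : ∀ w : Fin n → ℝ,
      ENNReal.ofReal (Real.exp (-(t * ∑ j, lam j * (W.mulVec w j) ^ 2)))
        = ∏ j, ENNReal.ofReal (Real.exp (-(t * lam j * (W.mulVec w j) ^ 2))) := by
    intro w
    rw [← ENNReal.ofReal_prod_of_nonneg (fun j _ => (Real.exp_pos _).le), ← Real.exp_sum]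
    congr 1
    rw [Finset.mul_sum, ← Finset.sum_neg_distrib]
    congr 1
    exact Finset.sum_congr rfl fun j _ => by ring
  simp_rw [hexp]
  have hFm : Measurable fun y : Fin n → ℝ =>
      ∏ j, ENNReal.ofReal (Real.exp (-(t * lam j * (y j) ^ 2))) := by
    refine Finset.measurable_prod _ fun j _ => ?_
    fun_prop
  have h2 : ∫⁻ w, ∏ j, ENNReal.ofReal (Real.exp (-(t * lam j * (W.mulVec w j) ^ 2)))
        ∂(Measure.pi fun _ : Fin n => gaussianReal 0 1)
      = ∫⁻ y, ∏ j, ENNReal.ofReal (Real.exp (-(t * lam j * (y j) ^ 2)))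
        ∂(Measure.pi fun _ : Fin n => gaussianReal 0 1) := by
    conv_rhs => rw [← map_mulVec_gaussianPi W hW]
    rw [lintegral_map hFm (measurable_mulVec W)]
  rw [h2, lintegral_pi_fin _ (fun j x => ENNReal.ofReal (Real.exp (-(t * lam j * x ^ 2))))
    (fun j => by fun_prop)]
  refine Finset.prod_congr rfl fun j _ => ?_
  rw [lintegral_exp_neg_mul_sq_gaussian (mul_nonneg ht.le (hA.eigenvalues_nonneg j))]
  have : 1 + 2 * (t * lam j) = 1 + 2 * lam j * t := by ring
  rw [this]

/-- Chernoff-type lower-tail bound for the Gaussian trace estimator.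
For any `t > 0` with `2 λⱼ t < 1` for all eigenvalues `λⱼ` of the SPSD matrix `A`, and
any `ε ∈ (0,1)`,
`Pr(tr_G^N(A) ≤ (1−ε) tr(A)) ≤ exp{t N (1−ε) tr(A)} ∏ⱼ (1 + 2 λⱼ t)^{−N/2}`. -/
theorem gaussian_lower_tail_mgf_bound (n N : ℕ) (A : Matrix (Fin n) (Fin n) ℝ)
    (hA : A.PosSemidef) (htr : 0 < A.trace)
    (t : ℝ) (ht : 0 < t) (hlamt : ∀ j : Fin n, 2 * hA.1.eigenvalues j * t < 1)
    (ε : ℝ) (hε : ε ∈ Set.Ioo (0 : ℝ) 1) :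
    gaussianVectorsMeasure n N
        {ω | gaussianEstimator n N A ω ≤ (1 - ε) * A.trace}
      ≤ ENNReal.ofReal (Real.exp (t * N * (1 - ε) * A.trace) *
          ∏ j : Fin n, (1 + 2 * hA.1.eigenvalues j * t) ^ (-(N : ℝ) / 2)) := by
  classical
  set a : ℝ := (1 - ε) * A.trace with ha
  set S : (Fin N → Fin n → ℝ) → ℝ := fun ω => ∑ i, (ω i) ⬝ᵥ A.mulVec (ω i) with hS
  have hQm : Measurable fun w : Fin n → ℝ => w ⬝ᵥ A.mulVec w := by
    simp only [dotProduct]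
    exact Finset.measurable_sum _ fun j _ =>
      (measurable_pi_apply j).mul ((measurable_pi_apply j).comp (measurable_mulVec A))
  have hSm : Measurable S :=
    Finset.measurable_sum _ fun i _ => hQm.comp (measurable_pi_apply i)
  have hgm : Measurable fun ω => ENNReal.ofReal (Real.exp (-(t * S ω))) := by fun_prop
  have hset : MeasurableSet {ω | gaussianEstimator n N A ω ≤ a} := by
    have hXm : Measurable (gaussianEstimator n N A) := by
      unfold gaussianEstimator
      exact (hSm.const_mul _)
    exact measurableSet_le hXm measurable_const
  -- Step 1 : Chernoff bound via Markov
  have step1 : gaussianVectorsMeasure n N {ω | gaussianEstimator n N A ω ≤ a}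
      ≤ ∫⁻ ω, ENNReal.ofReal (Real.exp (t * N * a) * Real.exp (-(t * S ω)))
          ∂gaussianVectorsMeasure n N := by
    calc gaussianVectorsMeasure n N {ω | gaussianEstimator n N A ω ≤ a}
        = ∫⁻ _ω in {ω | gaussianEstimator n N A ω ≤ a}, 1 ∂gaussianVectorsMeasure n N := by
          rw [setLIntegral_one]
      _ ≤ ∫⁻ ω in {ω | gaussianEstimator n N A ω ≤ a},
            ENNReal.ofReal (Real.exp (t * N * a) * Real.exp (-(t * S ω)))
            ∂gaussianVectorsMeasure n N := by
          refine setLIntegral_mono (by fun_prop) fun ω hω => ?_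
          have hSa : S ω ≤ N * a := by
            by_cases hN : (N : ℝ) = 0
            · have hN0 : N = 0 := by exact_mod_cast hN
              subst hN0
              simp [hS]
            · have hNpos : 0 < (N : ℝ) :=
                lt_of_le_of_ne (Nat.cast_nonneg N) (Ne.symm hN)
              have hω' : (1 / (N : ℝ)) * S ω ≤ a := hω
              calc S ω = N * ((1 / (N : ℝ)) * S ω) := by field_simp
                _ ≤ N * a := mul_le_mul_of_nonneg_left hω' hNpos.le
          have hts : t * S ω ≤ t * N * a := by
            calc t * S ω ≤ t * (N * a) := mul_le_mul_of_nonneg_left hSa ht.le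
              _ = t * N * a := by ring
          rw [← Real.exp_add]
          refine ENNReal.one_le_ofReal.mpr ?_
          exact Real.one_le_exp (by linarith)
      _ ≤ ∫⁻ ω, ENNReal.ofReal (Real.exp (t * N * a) * Real.exp (-(t * S ω)))
            ∂gaussianVectorsMeasure n N := setLIntegral_le_lintegral _ _
  -- Step 2 : factor out the constant
  have step2 : ∫⁻ ω, ENNReal.ofReal (Real.exp (t * N * a) * Real.exp (-(t * S ω)))
        ∂gaussianVectorsMeasure n N
      = ENNReal.ofReal (Real.exp (t * N * a))
        * ∫⁻ ω, ENNReal.ofReal (Real.exp (-(t * S ω))) ∂gaussianVectorsMeasure n N := by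
    simp_rw [ENNReal.ofReal_mul (Real.exp_pos _).le]
    exact lintegral_const_mul _ hgm
  -- Step 3 : the integral factorizes over the `N` independent vectors
  have step3 : ∫⁻ ω, ENNReal.ofReal (Real.exp (-(t * S ω))) ∂gaussianVectorsMeasure n N
      = (∫⁻ w, ENNReal.ofReal (Real.exp (-(t * (w ⬝ᵥ A.mulVec w))))
          ∂(Measure.pi fun _ : Fin n => ProbabilityTheory.gaussianReal 0 1)) ^ N := by
    have hfac : ∀ ω : Fin N → Fin n → ℝ, ENNReal.ofReal (Real.exp (-(t * S ω)))
        = ∏ i, ENNReal.ofReal (Real.exp (-(t * ((ω i) ⬝ᵥ A.mulVec (ω i))))) := by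
      intro ω
      rw [← ENNReal.ofReal_prod_of_nonneg (fun i _ => (Real.exp_pos _).le), ← Real.exp_sum]
      congr 1
      rw [hS, Finset.mul_sum, ← Finset.sum_neg_distrib]
    simp_rw [hfac]
    rw [gaussianVectorsMeasure, lintegral_pi_fin _
      (fun _ w => ENNReal.ofReal (Real.exp (-(t * (w ⬝ᵥ A.mulVec w)))))
      (fun i => by fun_prop)]
    rw [Finset.prod_const, Finset.card_univ, Fintype.card_fin]
  rw [lintegral_exp_neg_quadratic_form A hA ht] at step3
  -- Assemble
  refine le_trans step1 ?_
  rw [step2, step3]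
  rw [← Finset.prod_pow]
  have hpow : ∀ j : Fin n,
      (ENNReal.ofReal ((1 + 2 * hA.1.eigenvalues j * t) ^ (-(1 : ℝ) / 2))) ^ N
        = ENNReal.ofReal ((1 + 2 * hA.1.eigenvalues j * t) ^ (-(N : ℝ) / 2)) := by
    intro j
    have hb : (0 : ℝ) ≤ 1 + 2 * hA.1.eigenvalues j * t := by
      have h1 : 0 ≤ hA.1.eigenvalues j := hA.eigenvalues_nonneg j
      positivity
    rw [← ENNReal.ofReal_pow (Real.rpow_nonneg hb _)]
    congr 1
    rw [← Real.rpow_natCast ((1 + 2 * hA.1.eigenvalues j * t) ^ (-(1 : ℝ) / 2)) N,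
      ← Real.rpow_mul hb]
    congr 1
    ring
  simp_rw [hpow]
  rw [← ENNReal.ofReal_prod_of_nonneg (fun j _ => Real.rpow_nonneg (by
      have h1 : 0 ≤ hA.1.eigenvalues j := hA.eigenvalues_nonneg j
      positivity) _),
    ← ENNReal.ofReal_mul (Real.exp_pos _).le]
  have haeq : t * ↑N * a = t * ↑N * (1 - ε) * A.trace := by rw [ha]; ring
  rw [haeq]
end
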